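/- arXiv:1201.1798 — 5 statements merged into one kernel-verified Lean document; each statement's English description precedes it below -/
import Mathlib

section
/- Let d ≥ 1 and let V_1, …, V_n (n ≥ 2) be nonzero proper linear subspaces of ℝ^d with positive weights ω_1, …, ω_n, and set m := Σ_{j=1}^n ω_j·dim(V_j). Then max_{i≠j} ⟨P_{V_i}, P_{V_j}⟩ ≥ (m²/d − Σ_{j=1}^n ω_j²·dim(V_j)) / (Σ_{i≠j} ω_i ω_j). -/
open scoped BigOperators

/-- The orthogonal projection onto a subspace `V` of `ℝ^d`, as a linear endomorphism. -/
noncomputable def proj {d : ℕ} (V : Submodule ℝ (EuclideanSpace ℝ (Fin d))) :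
    EuclideanSpace ℝ (Fin d) →ₗ[ℝ] EuclideanSpace ℝ (Fin d) :=
  V.subtype ∘ₗ (V.orthogonalProjectionOnto).toLinearMap

/-- `⟨P_V, P_W⟩ = trace (P_V P_W)`. -/
noncomputable def trPP {d : ℕ} (V W : Submodule ℝ (EuclideanSpace ℝ (Fin d))) : ℝ :=
  LinearMap.trace ℝ _ (proj V ∘ₗ proj W)

/-- With `n ≥ 2` elements, the set of off-diagonal pairs of indices is nonempty. -/
theorem offDiag_univ_nonempty {n : ℕ} (hn : 2 ≤ n) :
    (Finset.univ.offDiag (α := Fin n)).Nonempty := by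
  rw [← Finset.coe_nonempty, Finset.coe_offDiag, Set.offDiag_nonempty]
  exact ⟨⟨0, by omega⟩, by simp, ⟨1, by omega⟩, by simp, by simp [Fin.ext_iff]⟩


noncomputable def pmat {d : ℕ} (V : Submodule ℝ (EuclideanSpace ℝ (Fin d))) :
    Matrix (Fin d) (Fin d) ℝ :=
  LinearMap.toMatrix (EuclideanSpace.basisFun (Fin d) ℝ).toBasis
    (EuclideanSpace.basisFun (Fin d) ℝ).toBasis (proj V)

lemma le_sup'_aux {β : Type*} (g : β → ℝ) {s : Finset β} {b : β}
    (hb : b ∈ s) (hne : s.Nonempty) : g b ≤ s.sup' hne g :=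
  Finset.le_sup' g hb

lemma trPP_eq {d : ℕ} (V W : Submodule ℝ (EuclideanSpace ℝ (Fin d))) :
    trPP V W = (pmat V * pmat W).trace := by
  rw [trPP, LinearMap.trace_eq_matrix_trace ℝ (EuclideanSpace.basisFun (Fin d) ℝ).toBasis,
    LinearMap.toMatrix_comp _ (EuclideanSpace.basisFun (Fin d) ℝ).toBasis _, pmat, pmat]

lemma pmat_symm {d : ℕ} (V : Submodule ℝ (EuclideanSpace ℝ (Fin d))) (i k : Fin d) :
    pmat V i k = pmat V k i := by
  simp only [pmat, LinearMap.toMatrix_apply, OrthonormalBasis.coe_toBasis_repr_apply,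
    OrthonormalBasis.repr_apply_apply, OrthonormalBasis.coe_toBasis]
  show (inner ℝ ((EuclideanSpace.basisFun (Fin d) ℝ) i) (proj V ((EuclideanSpace.basisFun (Fin d) ℝ) k)) : ℝ) = _
  rw [proj]
  simp only [LinearMap.coe_comp, Function.comp_apply, ContinuousLinearMap.coe_coe,
    Submodule.coe_subtype]
  simp only [← Submodule.starProjection_apply]
  rw [← Submodule.inner_starProjection_left_eq_right]
  exact real_inner_comm _ _

lemma proj_idem {d : ℕ} (V : Submodule ℝ (EuclideanSpace ℝ (Fin d))) :
    proj V ∘ₗ proj V = proj V := by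
  ext x
  simp [proj, Submodule.orthogonalProjectionOnto_mem_subspace_eq_self, Submodule.starProjection_eq_self_iff.2 (V.starProjection_apply_mem x)]

lemma pmat_mul_self {d : ℕ} (V : Submodule ℝ (EuclideanSpace ℝ (Fin d))) :
    pmat V * pmat V = pmat V := by
  rw [pmat, ← LinearMap.toMatrix_comp _ (EuclideanSpace.basisFun (Fin d) ℝ).toBasis, proj_idem]

lemma isProj_proj {d : ℕ} (V : Submodule ℝ (EuclideanSpace ℝ (Fin d))) :
    LinearMap.IsProj V (proj V) := by
  constructor
  · intro x; exact (V.orthogonalProjectionOnto x).2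
  · intro x hx; simp [proj, Submodule.starProjection_eq_self_iff.2, hx,
      Submodule.orthogonalProjectionOnto_mem_subspace_eq_self (K := V) ⟨x, hx⟩]

lemma pmat_trace {d : ℕ} (V : Submodule ℝ (EuclideanSpace ℝ (Fin d))) :
    (pmat V).trace = (Module.finrank ℝ V : ℝ) := by
  rw [pmat, ← LinearMap.trace_eq_matrix_trace ℝ]
  exact (isProj_proj V).trace

set_option maxHeartbeats 1000000 in
theorem stmt3 {d n : ℕ} (hd : 1 ≤ d) (hn : 2 ≤ n)
    (V : Fin n → Submodule ℝ (EuclideanSpace ℝ (Fin d)))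
    (hVbot : ∀ j, V j ≠ ⊥) (hVtop : ∀ j, V j ≠ ⊤)
    (ω : Fin n → ℝ) (hω : ∀ j, 0 < ω j)
    (m : ℝ) (hm : m = ∑ j, ω j * (Module.finrank ℝ (V j) : ℝ)) :
    Finset.sup' (Finset.univ.offDiag (α := Fin n)) (offDiag_univ_nonempty hn)
        (fun ij => trPP (V ij.1) (V ij.2)) ≥
      (m ^ 2 / d - ∑ j, ω j ^ 2 * (Module.finrank ℝ (V j) : ℝ)) /
        (∑ ij ∈ Finset.univ.offDiag (α := Fin n), ω ij.1 * ω ij.2) := by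
  classical
  set S : Matrix (Fin d) (Fin d) ℝ := ∑ j, ω j • pmat (V j) with hS
  set M := Finset.sup' (Finset.univ.offDiag (α := Fin n)) (offDiag_univ_nonempty hn)
      (fun ij => trPP (V ij.1) (V ij.2)) with hMdef
  have hSsym : ∀ i k, S i k = S k i := by
    intro i k
    simp only [hS, Finset.sum_apply, Matrix.sum_apply, Matrix.smul_apply]
    exact Finset.sum_congr rfl fun j _ => by rw [pmat_symm]
  have htrS : S.trace = m := by
    rw [hS, Matrix.trace_sum, hm]
    exact Finset.sum_congr rfl fun j _ => by rw [Matrix.trace_smul, pmat_trace, smul_eq_mul]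
  have hSS : (S * S).trace
      = (∑ j, ω j ^ 2 * (Module.finrank ℝ (V j) : ℝ))
        + ∑ ij ∈ Finset.univ.offDiag (α := Fin n),
            ω ij.1 * ω ij.2 * trPP (V ij.1) (V ij.2) := by
    have expand : (S * S).trace
        = ∑ ij ∈ Finset.univ ×ˢ (Finset.univ : Finset (Fin n)),
            ω ij.1 * ω ij.2 * (pmat (V ij.1) * pmat (V ij.2)).trace := by
      rw [hS, Finset.sum_mul_sum, ← Finset.sum_product']
      rw [Matrix.trace_sum]
      refine Finset.sum_congr rfl fun ij _ => ?_
      rw [smul_mul_assoc, mul_smul_comm, smul_smul, Matrix.trace_smul, smul_eq_mul]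
    rw [expand, ← Finset.diag_union_offDiag,
      Finset.sum_union (Finset.disjoint_diag_offDiag _), Finset.sum_diag]
    congr 1
    · refine Finset.sum_congr rfl fun j _ => ?_
      rw [pmat_mul_self, pmat_trace, sq]
    · exact Finset.sum_congr rfl fun ij _ => by rw [trPP_eq]
  have hd0 : (0 : ℝ) < d := by exact_mod_cast hd
  have hCS : m ^ 2 ≤ (d : ℝ) * (S * S).trace := by
    have h1 : (S * S).trace = ∑ i, ∑ j, S i j ^ 2 := by
      rw [Matrix.trace]
      simp only [Matrix.diag_apply, Matrix.mul_apply]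
      refine Finset.sum_congr rfl fun i _ => Finset.sum_congr rfl fun j _ => ?_
      rw [hSsym j i, sq]
    have h2 : ∑ i, S i i ^ 2 ≤ ∑ i, ∑ j, S i j ^ 2 :=
      Finset.sum_le_sum fun i _ =>
        Finset.single_le_sum (f := fun j => S i j ^ 2) (fun j _ => sq_nonneg _) (Finset.mem_univ i)
    have h3 : (∑ i, S i i) ^ 2 ≤ (d : ℝ) * ∑ i, S i i ^ 2 := by
      simpa using sq_sum_le_card_mul_sum_sq (s := (Finset.univ : Finset (Fin d)))
        (f := fun i => S i i)
    have htr : ∑ i, S i i = m := by rw [← htrS, Matrix.trace]; rfl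
    rw [htr] at h3
    have h4 := mul_le_mul_of_nonneg_left h2 hd0.le
    rw [h1]
    linarith
  have hden : 0 < ∑ ij ∈ Finset.univ.offDiag (α := Fin n), ω ij.1 * ω ij.2 :=
    Finset.sum_pos (fun ij _ => mul_pos (hω _) (hω _)) (offDiag_univ_nonempty hn)
  have hO : ∑ ij ∈ Finset.univ.offDiag (α := Fin n),
        ω ij.1 * ω ij.2 * trPP (V ij.1) (V ij.2)
      ≤ M * ∑ ij ∈ Finset.univ.offDiag (α := Fin n), ω ij.1 * ω ij.2 := by
    rw [Finset.mul_sum]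
    refine Finset.sum_le_sum fun ij hij => ?_
    have hle : trPP (V ij.1) (V ij.2) ≤ M :=
      le_sup'_aux (β := Fin n × Fin n) (fun ij => trPP (V ij.1) (V ij.2)) hij
        (offDiag_univ_nonempty hn)
    have hpos : (0 : ℝ) ≤ ω ij.1 * ω ij.2 := (mul_pos (hω _) (hω _)).le
    calc ω ij.1 * ω ij.2 * trPP (V ij.1) (V ij.2) ≤ ω ij.1 * ω ij.2 * M :=
          mul_le_mul_of_nonneg_left hle hpos
      _ = M * (ω ij.1 * ω ij.2) := mul_comm _ _
  rw [ge_iff_le, div_le_iff₀ hden]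
  have hdiv : m ^ 2 / d ≤ (S * S).trace := by
    rw [div_le_iff₀ hd0]
    linarith
  linarith
end

section
/- Let d ≥ 2 and let V_1, …, V_n be pairwise distinct nonzero proper linear subspaces of ℝ^d that are equiangular, i.e. there is a constant α such that ⟨P_{V_i}, P_{V_j}⟩ = α for all i ≠ j. Then n ≤ d(d+1)/2. -/
open scoped BigOperators

section Aux
open Matrix

variable {d : ℕ}

lemma aux_trace_transpose_mul_self (A : Matrix (Fin d) (Fin d) ℝ) :
    (Aᵀ * A).trace = ∑ j, ∑ i, (A i j)^2 := by
  simp [Matrix.trace, Matrix.mul_apply, Matrix.diag, sq]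

lemma aux_trace_transpose_mul_self_nonneg (A : Matrix (Fin d) (Fin d) ℝ) :
    0 ≤ (Aᵀ * A).trace := by
  rw [aux_trace_transpose_mul_self]
  positivity

lemma aux_eq_zero_of_trace_transpose_mul_self (A : Matrix (Fin d) (Fin d) ℝ)
    (h : (Aᵀ * A).trace = 0) : A = 0 := by
  rw [aux_trace_transpose_mul_self] at h
  ext i j
  have h1 : ∀ j ∈ Finset.univ, (0:ℝ) ≤ ∑ i, (A i j)^2 := by
    intro j _; positivity
  have h2 := (Finset.sum_eq_zero_iff_of_nonneg h1).mp h j (Finset.mem_univ j)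
  have h3 : ∀ i ∈ Finset.univ, (0:ℝ) ≤ (A i j)^2 := by intro i _; positivity
  have := (Finset.sum_eq_zero_iff_of_nonneg h3).mp h2 i (Finset.mem_univ i)
  simpa using pow_eq_zero_iff (by norm_num) |>.mp this

variable {A B : Matrix (Fin d) (Fin d) ℝ}

lemma aux_trace_mul_nonneg (hAs : Aᵀ = A) (hBs : Bᵀ = B)
    (hA : A * A = A) (hB : B * B = B) : 0 ≤ (A * B).trace := by
  have key : (B * A)ᵀ * (B * A) = A * (B * (B * A)) := by
    rw [Matrix.transpose_mul, hAs, hBs]; noncomm_ring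
  have heq : ((B * A)ᵀ * (B * A)).trace = (A * B).trace := by
    rw [key]
    have : B * (B * A) = B * A := by rw [← Matrix.mul_assoc, hB]
    rw [this, ← Matrix.mul_assoc, Matrix.trace_mul_comm, ← Matrix.mul_assoc, hA]
  rw [← heq]; exact aux_trace_transpose_mul_self_nonneg _

lemma aux_trace_mul_le (hAs : Aᵀ = A) (hBs : Bᵀ = B)
    (hA : A * A = A) (hB : B * B = B) : (A * B).trace ≤ A.trace := by
  have hBs' : (1 - B)ᵀ = 1 - B := by
    rw [Matrix.transpose_sub, Matrix.transpose_one, hBs]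
  have hB' : (1 - B) * (1 - B) = 1 - B := by
    rw [Matrix.sub_mul, Matrix.mul_sub, Matrix.mul_sub, hB]
    simp
  have h := aux_trace_mul_nonneg hAs hBs' hA hB'
  have : A * (1 - B) = A - A * B := by rw [Matrix.mul_sub]; simp
  rw [this, Matrix.trace_sub] at h
  linarith

lemma aux_trace_pos (hAs : Aᵀ = A) (hA : A * A = A) (hA0 : A ≠ 0) :
    0 < A.trace := by
  have h1 : (Aᵀ * A).trace = A.trace := by rw [hAs, hA]
  rcases lt_or_eq_of_le (aux_trace_transpose_mul_self_nonneg A) with h | h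
  · rwa [h1] at h
  · exact absurd (aux_eq_zero_of_trace_transpose_mul_self A h.symm) hA0

lemma aux_eq_of_trace (hAs : Aᵀ = A) (hBs : Bᵀ = B)
    (hA : A * A = A) (hB : B * B = B)
    (h1 : (A * B).trace = A.trace) (h2 : (A * B).trace = B.trace) : A = B := by
  have hCs : (A - B)ᵀ = A - B := by rw [Matrix.transpose_sub, hAs, hBs]
  have hexp : (A - B)ᵀ * (A - B) = A * A - A * B - B * A + B * B := by
    rw [hCs]; noncomm_ring
  have htr : ((A - B)ᵀ * (A - B)).trace = 0 := by
    rw [hexp, hA, hB, Matrix.trace_add, Matrix.trace_sub, Matrix.trace_sub,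
      Matrix.trace_mul_comm B A]
    linarith
  have := aux_eq_zero_of_trace_transpose_mul_self _ htr
  exact sub_eq_zero.mp this

/-- The submodule of symmetric matrices. -/
def symMat (d : ℕ) : Submodule ℝ (Matrix (Fin d) (Fin d) ℝ) where
  carrier := {A | Aᵀ = A}
  add_mem' := by intro a b ha hb; simp_all [Matrix.transpose_add]
  zero_mem' := by simp
  smul_mem' := by intro c a ha; simp_all [Matrix.transpose_smul]

noncomputable def symEquiv (d : ℕ) :
    symMat d ≃ₗ[ℝ] ({p : Fin d × Fin d // p.1 ≤ p.2} → ℝ) where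
  toFun A p := A.1 p.1.1 p.1.2
  map_add' A B := rfl
  map_smul' c A := rfl
  invFun f := ⟨Matrix.of fun i j =>
      if h : i ≤ j then f ⟨(i,j), h⟩ else f ⟨(j,i), le_of_not_ge h⟩, by
    ext i j
    simp only [Matrix.transpose_apply, Matrix.of_apply]
    rcases le_or_gt i j with h | h
    · rcases eq_or_lt_of_le h with rfl | h'
      · rfl
      · rw [dif_neg (not_le.mpr h'), dif_pos h]
    · rw [dif_pos h.le, dif_neg (not_le.mpr h)]⟩
  left_inv := by
    rintro ⟨A, hA⟩
    ext i j
    simp only [Matrix.of_apply]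
    split_ifs with h
    · rfl
    · exact (congrFun (congrFun hA j) i).symm ▸ rfl
  right_inv := by
    intro f
    ext p
    simp only [Matrix.of_apply]
    rw [dif_pos p.2]

lemma finrank_symMat (d : ℕ) : Module.finrank ℝ (symMat d) = (d+1).choose 2 := by
  rw [(symEquiv d).finrank_eq, Module.finrank_pi]
  rw [← Fintype.card_congr (Sym2.sortEquiv (α := Fin d))]
  simp [Sym2.card]

end Aux

section ProjMat
open Matrix

variable {d : ℕ}

/-- The matrix of the orthogonal projection in the standard basis. -/
noncomputable def matP (V : Submodule ℝ (EuclideanSpace ℝ (Fin d))) :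
    Matrix (Fin d) (Fin d) ℝ :=
  LinearMap.toMatrix (EuclideanSpace.basisFun (Fin d) ℝ).toBasis
    (EuclideanSpace.basisFun (Fin d) ℝ).toBasis (proj V)

lemma trPP_eq_trace (V W : Submodule ℝ (EuclideanSpace ℝ (Fin d))) :
    trPP V W = (matP V * matP W).trace := by
  rw [trPP, LinearMap.trace_eq_matrix_trace ℝ (EuclideanSpace.basisFun (Fin d) ℝ).toBasis,
    LinearMap.toMatrix_comp _ (EuclideanSpace.basisFun (Fin d) ℝ).toBasis]
  rfl

lemma matP_transpose (V : Submodule ℝ (EuclideanSpace ℝ (Fin d))) : (matP V)ᵀ = matP V := by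
  have hsym : (proj V).IsSymmetric := fun x y =>
    V.inner_starProjection_left_eq_right x y
  have hadj : LinearMap.adjoint (proj V) = proj V :=
    (LinearMap.isSelfAdjoint_iff').mp (((proj V).isSymmetric_iff_isSelfAdjoint).mp hsym)
  have h := LinearMap.toMatrix_adjoint (EuclideanSpace.basisFun (Fin d) ℝ)
    (EuclideanSpace.basisFun (Fin d) ℝ) (proj V)
  rw [hadj] at h
  ext i j
  have := congrFun (congrFun h i) j
  simpa [Matrix.conjTranspose_apply, matP] using this.symm

lemma matP_idem (V : Submodule ℝ (EuclideanSpace ℝ (Fin d))) :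
    matP V * matP V = matP V := by
  rw [matP, ← LinearMap.toMatrix_comp _ (EuclideanSpace.basisFun (Fin d) ℝ).toBasis]
  congr 1
  apply LinearMap.ext; intro x
  simp [proj, Submodule.starProjection_eq_self_iff]

lemma matP_inj {V W : Submodule ℝ (EuclideanSpace ℝ (Fin d))} (h : matP V = matP W) :
    V = W := by
  have hp : proj V = proj W :=
    (LinearMap.toMatrix (EuclideanSpace.basisFun (Fin d) ℝ).toBasis
      (EuclideanSpace.basisFun (Fin d) ℝ).toBasis).injective h
  ext x
  constructor
  · intro hx
    have : proj V x = x := V.starProjection_eq_self_iff.mpr hx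
    rw [hp] at this
    exact W.starProjection_eq_self_iff.mp this
  · intro hx
    have : proj W x = x := W.starProjection_eq_self_iff.mpr hx
    rw [← hp] at this
    exact V.starProjection_eq_self_iff.mp this

lemma matP_ne_zero {V : Submodule ℝ (EuclideanSpace ℝ (Fin d))} (hV : V ≠ ⊥) :
    matP V ≠ 0 := by
  intro h
  apply hV
  apply Submodule.eq_bot_iff V |>.mpr
  intro x hx
  have hp : proj V = 0 := by
    have := (LinearMap.toMatrix (EuclideanSpace.basisFun (Fin d) ℝ).toBasis
      (EuclideanSpace.basisFun (Fin d) ℝ).toBasis).injective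
        (a₁ := proj V) (a₂ := 0) (by simpa [matP] using h)
    exact this
  have h1 : proj V x = x := V.starProjection_eq_self_iff.mpr hx
  rw [hp] at h1
  simpa using h1.symm

end ProjMat

open Matrix in
theorem stmt6 {d n : ℕ} (hd : 2 ≤ d)
    (V : Fin n → Submodule ℝ (EuclideanSpace ℝ (Fin d)))
    (hVinj : Function.Injective V)
    (hVbot : ∀ j, V j ≠ ⊥) (hVtop : ∀ j, V j ≠ ⊤)
    (α : ℝ) (hequi : ∀ i j, i ≠ j → trPP (V i) (V j) = α) :
    n ≤ (d + 1).choose 2 := by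
  -- trivial case n ≤ 1
  rcases le_or_gt n 1 with hn | hn
  · have h1 : 0 < (d + 1).choose 2 := Nat.choose_pos (by omega)
    omega
  -- abbreviations
  have hnt : Nontrivial (Fin n) := Fin.nontrivial_iff_two_le.mpr hn
  set M : Fin n → Matrix (Fin d) (Fin d) ℝ := fun j => matP (V j) with hM
  have hMs : ∀ j, (M j)ᵀ = M j := fun j => matP_transpose (V j)
  have hMi : ∀ j, M j * M j = M j := fun j => matP_idem (V j)
  have hM0 : ∀ j, M j ≠ 0 := fun j => matP_ne_zero (hVbot j)
  have htr : ∀ i j, i ≠ j → (M i * M j).trace = α := by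
    intro i j hij
    rw [← trPP_eq_trace]
    exact hequi i j hij
  set T : Fin n → ℝ := fun j => (M j).trace with hT
  have hTpos : ∀ j, 0 < T j := fun j => aux_trace_pos (hMs j) (hMi j) (hM0 j)
  have hα0 : 0 ≤ α := by
    have i0 : Fin n := ⟨0, by omega⟩
    obtain ⟨j, hj⟩ := exists_ne i0
    rw [← htr i0 j (Ne.symm hj)]
    exact aux_trace_mul_nonneg (hMs i0) (hMs j) (hMi i0) (hMi j)
  have hTα : ∀ i, α ≤ T i := by
    intro i
    obtain ⟨j, hj⟩ := exists_ne i
    rw [← htr i j (Ne.symm hj)]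
    exact aux_trace_mul_le (hMs i) (hMs j) (hMi i) (hMi j)
  -- at most one index with T i = α
  have huniq : ∀ i j, T i = α → T j = α → i = j := by
    intro i j hi hj
    by_contra hij
    have h1 : (M i * M j).trace = (M i).trace := by rw [htr i j hij, ← hi]
    have h2 : (M i * M j).trace = (M j).trace := by rw [htr i j hij, ← hj]
    exact hij (hVinj (matP_inj (aux_eq_of_trace (hMs i) (hMs j) (hMi i) (hMi j) h1 h2)))
  -- linear independence of the projections inside symMat
  have hmem : ∀ j, M j ∈ symMat d := fun j => hMs j
  set W : Fin n → symMat d := fun j => ⟨M j, hmem j⟩ with hW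
  have hindep : LinearIndependent ℝ W := by
    rw [Fintype.linearIndependent_iff]
    intro g hg
    have hg' : ∑ j, g j • M j = 0 := by
      have := congrArg (Submodule.subtype (symMat d)) hg
      simpa [W] using this
    set S : ℝ := ∑ j, g j with hS
    -- the trace equations
    have key : ∀ i, g i * T i + α * (S - g i) = 0 := by
      intro i
      have h0 : (M i * (∑ j, g j • M j)).trace = 0 := by rw [hg']; simp
      have h1 : (M i * (∑ j, g j • M j)).trace = ∑ j, g j * (M i * M j).trace := by
        rw [Matrix.mul_sum, Matrix.trace_sum]
        congr 1; ext j
        rw [Matrix.mul_smul, Matrix.trace_smul]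
        simp
      rw [h1] at h0
      have h2 : ∑ j, g j * (M i * M j).trace
          = g i * T i + ∑ j ∈ Finset.univ.erase i, g j * α := by
        rw [← Finset.add_sum_erase _ _ (Finset.mem_univ i)]
        congr 1
        · rw [hMi i]
        · apply Finset.sum_congr rfl
          intro j hj
          rw [Matrix.trace_mul_comm, htr j i (Finset.ne_of_mem_erase hj)]
      have h3 : ∑ j ∈ Finset.univ.erase i, g j * α = (S - g i) * α := by
        rw [← Finset.sum_mul]
        congr 1
        rw [hS, ← Finset.add_sum_erase _ _ (Finset.mem_univ i)]
        ring
      rw [h2, h3] at h0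
      linarith
    -- summed quadratic identity
    have hsum : ∑ i, g i ^ 2 * (T i - α) + α * S ^ 2 = 0 := by
      have : ∑ i, g i * (g i * T i + α * (S - g i)) = 0 := by
        apply Finset.sum_eq_zero
        intro i _
        rw [key i]; ring
      have hexp : ∑ i, g i * (g i * T i + α * (S - g i))
          = ∑ i, (g i ^ 2 * (T i - α) + α * S * g i) := by
        apply Finset.sum_congr rfl
        intro i _
        ring
      rw [Finset.sum_add_distrib, ← Finset.mul_sum] at hexp
      rw [hexp, ← hS] at this
      linarith [this]
    -- each summand vanishes
    have hterm : ∀ i ∈ Finset.univ, (0:ℝ) ≤ g i ^ 2 * (T i - α) := by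
      intro i _
      exact mul_nonneg (sq_nonneg _) (by linarith [hTα i])
    have hsum0 : ∑ i, g i ^ 2 * (T i - α) = 0 ∧ α * S ^ 2 = 0 := by
      have ha := Finset.sum_nonneg hterm
      have hb : 0 ≤ α * S ^ 2 := mul_nonneg hα0 (sq_nonneg S)
      constructor <;> linarith
    have hzero : ∀ i, g i ^ 2 * (T i - α) = 0 := by
      intro i
      exact (Finset.sum_eq_zero_iff_of_nonneg hterm).mp hsum0.1 i (Finset.mem_univ i)
    intro i
    by_cases hi : T i = α
    · -- the unique degenerate index
      have hαpos : 0 < α := hi ▸ hTpos i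
      have hS0 : S = 0 := by
        rcases mul_eq_zero.mp hsum0.2 with h | h
        · exact absurd h (ne_of_gt hαpos)
        · exact pow_eq_zero_iff (by norm_num) |>.mp h
      have hother : ∀ j, j ≠ i → g j = 0 := by
        intro j hj
        have hTj : T j ≠ α := fun h => hj (huniq j i h hi)
        have hTj' : 0 < T j - α := sub_pos.mpr (lt_of_le_of_ne (hTα j) (Ne.symm hTj))
        have := hzero j
        have hg2 : g j ^ 2 = 0 := by
          rcases mul_eq_zero.mp this with h | h
          · exact h
          · exact absurd h (ne_of_gt hTj')
        exact pow_eq_zero_iff (by norm_num) |>.mp hg2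
      have : S = g i := by
        rw [hS, ← Finset.add_sum_erase _ _ (Finset.mem_univ i)]
        rw [Finset.sum_eq_zero (fun j hj => hother j (Finset.ne_of_mem_erase hj))]
        ring
      rw [← this, hS0]
    · have hTi' : 0 < T i - α := sub_pos.mpr (lt_of_le_of_ne (hTα i) (Ne.symm hi))
      have := hzero i
      have hg2 : g i ^ 2 = 0 := by
        rcases mul_eq_zero.mp this with h | h
        · exact h
        · exact absurd h (ne_of_gt hTi')
      exact pow_eq_zero_iff (by norm_num) |>.mp hg2
  have hcard := hindep.fintype_card_le_finrank
  rwa [Fintype.card_fin, finrank_symMat] at hcard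
end

section
/- Let p ≥ 1 be an integer, let 1 ≤ k ≤ d−1, and let {(V_j, ω_j)}_{j=1}^n be a tight p-fusion frame in ℝ^d in which every subspace V_j has dimension k. Then the family of orthogonal complements {(V_j^⊥, ω_j)}_{j=1}^n is also a tight p-fusion frame, i.e. there is a constant B > 0 with Σ_{j=1}^n ω_j ‖P_{V_j^⊥}(x)‖^{2p} = B ‖x‖^{2p} for all x ∈ ℝ^d. -/
open scoped BigOperators

open RealInnerProductSpace

namespace Stmt12Aux

noncomputable def Q {d : ℕ} (V : Submodule ℝ (EuclideanSpace ℝ (Fin d)))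
    (x : EuclideanSpace ℝ (Fin d)) : ℝ :=
  ‖proj V x‖ ^ 2

lemma proj_mem {d : ℕ} (V : Submodule ℝ (EuclideanSpace ℝ (Fin d))) (x : EuclideanSpace ℝ (Fin d)) :
    proj V x ∈ V := by
  simp [proj]

lemma inner_proj_eq {d : ℕ} (V : Submodule ℝ (EuclideanSpace ℝ (Fin d)))
    (x w : EuclideanSpace ℝ (Fin d)) (hw : w ∈ V) : ⟪x - proj V x, w⟫ = 0 := by
  simpa [proj] using Submodule.starProjection_inner_eq_zero (K := V) x w hw

lemma Q_expand {d : ℕ} (V : Submodule ℝ (EuclideanSpace ℝ (Fin d)))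
    (x y : EuclideanSpace ℝ (Fin d)) (t : ℝ) :
    Q V (x + t • y) = Q V x + (2 * ⟪proj V x, y⟫) * t + Q V y * t ^ 2 := by
  have hmap : proj V (x + t • y) = proj V x + t • proj V y := by
    simp [map_add, map_smul]
  have hPP : ⟪proj V x, proj V y⟫ = ⟪proj V x, y⟫ := by
    have := inner_proj_eq V y (proj V x) (proj_mem V x)
    have h2 : ⟪y - proj V y, proj V x⟫ = 0 := by
      simpa [real_inner_comm] using this
    have := inner_sub_left (𝕜 := ℝ) y (proj V y) (proj V x)
    rw [h2] at this
    have h3 : ⟪y, proj V x⟫ = ⟪proj V y, proj V x⟫ := by linarith [this]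
    rw [real_inner_comm, ← h3, real_inner_comm]
  rw [Q, hmap, norm_add_sq_real]
  rw [real_inner_smul_right, hPP, norm_smul]
  simp [Q, mul_pow]
  ring

lemma pythag {d : ℕ} (V : Submodule ℝ (EuclideanSpace ℝ (Fin d))) (x : EuclideanSpace ℝ (Fin d)) :
    ‖proj Vᗮ x‖ ^ 2 = ‖x‖ ^ 2 - Q V x := by
  have h1 : proj Vᗮ x = x - proj V x := by
    simp [proj, Submodule.starProjection_orthogonal_val]
  have h2 : ⟪proj V x, x - proj V x⟫ = 0 := by
    rw [real_inner_comm]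
    exact inner_proj_eq V x (proj V x) (proj_mem V x)
  have h3 : ‖x‖^2 = ‖proj V x‖^2 + ‖x - proj V x‖^2 := by
    have hx : x = proj V x + (x - proj V x) := by abel
    calc ‖x‖^2 = ‖proj V x + (x - proj V x)‖^2 := by rw [← hx]
    _ = ‖proj V x‖^2 + 2 * ⟪proj V x, x - proj V x⟫ + ‖x - proj V x‖^2 := norm_add_sq_real _ _
    _ = ‖proj V x‖^2 + ‖x - proj V x‖^2 := by rw [h2]; ring
  rw [h1, Q]; linarith

lemma sum_inner_onb_sq {d : ℕ} {ι : Type*} [Fintype ι]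
    (b : OrthonormalBasis ι ℝ (EuclideanSpace ℝ (Fin d))) (v : EuclideanSpace ℝ (Fin d)) :
    ∑ i, ⟪v, b i⟫ ^ 2 = ‖v‖ ^ 2 := by
  calc ∑ i, ⟪v, b i⟫ ^ 2 = ∑ i, ⟪v, b i⟫ * ⟪b i, v⟫ := by
        refine Finset.sum_congr rfl fun i _ => ?_
        rw [sq, real_inner_comm v (b i)]
  _ = ⟪v, v⟫ := b.sum_inner_mul_inner v v
  _ = ‖v‖ ^ 2 := real_inner_self_eq_norm_sq v

lemma Q_eq_sum_inner {d : ℕ} (V : Submodule ℝ (EuclideanSpace ℝ (Fin d)))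
    (y : EuclideanSpace ℝ (Fin d)) :
    Q V y = ∑ l : Fin (Module.finrank ℝ V),
      ⟪((stdOrthonormalBasis ℝ V) l : EuclideanSpace ℝ (Fin d)), y⟫ ^ 2 := by
  set f := stdOrthonormalBasis ℝ V with hf
  set u := V.orthogonalProjectionOnto y with hu
  have h0 : Q V y = ‖u‖^2 := by simp [Q, proj]; rfl
  have h1 : (⟪u, u⟫) = ‖u‖^2 := real_inner_self_eq_norm_sq u
  have h2 := f.sum_inner_mul_inner u u
  rw [h1] at h2
  rw [h0, ← h2]
  refine Finset.sum_congr rfl fun l _ => ?_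
  have hco : (⟪u, f l⟫) = ⟪(u : EuclideanSpace ℝ (Fin d)), (f l : EuclideanSpace ℝ (Fin d))⟫ := rfl
  have hco2 : (⟪f l, u⟫) = ⟪(f l : EuclideanSpace ℝ (Fin d)), (u : EuclideanSpace ℝ (Fin d))⟫ := rfl
  have hy : ⟪(f l : EuclideanSpace ℝ (Fin d)), (u : EuclideanSpace ℝ (Fin d))⟫
      = ⟪(f l : EuclideanSpace ℝ (Fin d)), y⟫ := by
    have h3 : ⟪(f l : EuclideanSpace ℝ (Fin d)), y - proj V y⟫ = 0 := by
      rw [real_inner_comm]; exact inner_proj_eq V y (f l) (SetLike.coe_mem _)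
    have h4 : proj V y = (u : EuclideanSpace ℝ (Fin d)) := rfl
    rw [h4] at h3
    have h5 := inner_sub_right (𝕜 := ℝ) (f l : EuclideanSpace ℝ (Fin d)) y
      (u : EuclideanSpace ℝ (Fin d))
    rw [h3] at h5
    linarith
  rw [hco, hco2, hy,
    show (inner ℝ (u : EuclideanSpace ℝ (Fin d)) ((f l : EuclideanSpace ℝ (Fin d))) : ℝ)
      = inner ℝ ((f l : EuclideanSpace ℝ (Fin d))) (u : EuclideanSpace ℝ (Fin d)) from real_inner_comm _ _,
    hy, sq]

lemma trace_Q {d : ℕ} (V : Submodule ℝ (EuclideanSpace ℝ (Fin d))) :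
    ∑ i : Fin d, Q V ((EuclideanSpace.basisFun (Fin d) ℝ) i) = Module.finrank ℝ V := by
  simp_rw [Q_eq_sum_inner]
  rw [Finset.sum_comm]
  have key : ∀ l : Fin (Module.finrank ℝ V),
      ∑ i : Fin d, ⟪((stdOrthonormalBasis ℝ V) l : EuclideanSpace ℝ (Fin d)),
        (EuclideanSpace.basisFun (Fin d) ℝ) i⟫ ^ 2 = 1 := by
    intro l
    rw [sum_inner_onb_sq]
    have : ‖((stdOrthonormalBasis ℝ V) l : EuclideanSpace ℝ (Fin d))‖ = 1 := by
      rw [Submodule.norm_coe]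
      exact (stdOrthonormalBasis ℝ V).orthonormal.1 l
    rw [this]; norm_num
  calc ∑ l : Fin (Module.finrank ℝ V), ∑ i : Fin d,
        ⟪((stdOrthonormalBasis ℝ V) l : EuclideanSpace ℝ (Fin d)),
          (EuclideanSpace.basisFun (Fin d) ℝ) i⟫ ^ 2
      = ∑ _l : Fin (Module.finrank ℝ V), (1:ℝ) := Finset.sum_congr rfl fun l _ => key l
  _ = Module.finrank ℝ V := by simp

open Polynomial in
lemma D2' (w a b c : ℝ) (m : ℕ) :
    eval 0 (derivative (derivative (C w * (C a + C b * X + C c * X^2)^m)))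
    = w * ((m:ℝ) * ((m-1 : ℕ):ℝ) * a^(m-1-1) * b^2 + 2*(m:ℝ) * a^(m-1) * c) := by
  have hT : derivative (C a + C b * X + C c * X^2) = C b + C (2*c) * X := by
    rw [C_mul, map_ofNat C 2]; simp [derivative_X_pow]; ring
  rw [derivative_C_mul, derivative_C_mul, eval_C_mul,
    derivative_pow, derivative_mul, derivative_mul, derivative_C, hT, derivative_pow, hT]
  simp
  left
  ring

lemma pow_fix (A : ℝ) (m : ℕ) (hm : 1 ≤ m) :
    ((m-1:ℕ):ℝ) * A^(m-1-1) * A = ((m-1:ℕ):ℝ) * A^(m-1) := by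
  rcases Nat.lt_or_ge m 2 with h|h
  · interval_cases m <;> simp
  · have h2 : m-1-1+1 = m-1 := by omega
    rw [mul_assoc, ← pow_succ, h2]

lemma norm_expand {d : ℕ} (x y : EuclideanSpace ℝ (Fin d)) (t : ℝ) :
    ‖x + t • y‖^2 = ‖x‖^2 + (2*⟪x,y⟫)*t + ‖y‖^2 * t^2 := by
  rw [norm_add_sq_real, real_inner_smul_right, norm_smul]
  simp [mul_pow]
  ring

open Polynomial in
lemma descent {d n k : ℕ} (hk : 1 ≤ k)
    (V : Fin n → Submodule ℝ (EuclideanSpace ℝ (Fin d)))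
    (hVdim : ∀ j, Module.finrank ℝ (V j) = k)
    (ω : Fin n → ℝ) (m : ℕ) (hm : 1 ≤ m) (Cc : ℝ)
    (h : ∀ x, ∑ j, ω j * (Q (V j) x)^m = Cc * (‖x‖^2)^m) :
    ∀ x, ∑ j, ω j * (Q (V j) x)^(m-1)
      = (Cc * (4*(m:ℝ)*((m-1:ℕ):ℝ)+2*m*d) / (4*(m:ℝ)*((m-1:ℕ):ℝ)+2*m*k)) * (‖x‖^2)^(m-1) := by
  intro x
  have key : ∀ y : EuclideanSpace ℝ (Fin d),
      ∑ j, ω j * ((m:ℝ) * ((m-1:ℕ):ℝ) * (Q (V j) x)^(m-1-1) * (2*⟪proj (V j) x, y⟫)^2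
          + 2*(m:ℝ) * (Q (V j) x)^(m-1) * (Q (V j) y))
      = Cc * ((m:ℝ) * ((m-1:ℕ):ℝ) * (‖x‖^2)^(m-1-1) * (2*⟪x,y⟫)^2
          + 2*(m:ℝ) * (‖x‖^2)^(m-1) * (‖y‖^2)) := by
    intro y
    set P1 : ℝ[X] := ∑ j, C (ω j) *
      (C (Q (V j) x) + C (2*⟪proj (V j) x, y⟫) * X + C (Q (V j) y) * X^2)^m with hP1
    set P2 : ℝ[X] := C Cc * (C (‖x‖^2) + C (2*⟪x,y⟫) * X + C (‖y‖^2) * X^2)^m with hP2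
    have hfun : ∀ t : ℝ, P1.eval t = P2.eval t := by
      intro t
      have h1 := h (x + t • y)
      have e1 : P1.eval t = ∑ j, ω j * (Q (V j) x + (2*⟪proj (V j) x, y⟫)*t + Q (V j) y * t^2)^m := by
        rw [hP1, eval_finset_sum]
        refine Finset.sum_congr rfl fun j _ => ?_
        simp only [eval_mul, eval_add, eval_pow, eval_C, eval_X]
      have e2 : P2.eval t = Cc * (‖x‖^2 + (2*⟪x,y⟫)*t + ‖y‖^2 * t^2)^m := by
        rw [hP2]
        simp only [eval_mul, eval_add, eval_pow, eval_C, eval_X]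
      rw [e1, e2]
      simp_rw [← Q_expand, ← norm_expand]
      exact h1
    have hP : P1 = P2 := Polynomial.funext hfun
    have hD := congrArg (fun P : ℝ[X] => eval 0 (derivative (derivative P))) hP
    rw [hP1, hP2, map_sum, map_sum, eval_finset_sum] at hD
    simp_rw [D2'] at hD
    exact hD
  set b := EuclideanSpace.basisFun (Fin d) ℝ with hb
  have hsum : ∑ i : Fin d, (∑ j, ω j * ((m:ℝ) * ((m-1:ℕ):ℝ) * (Q (V j) x)^(m-1-1) * (2*⟪proj (V j) x, b i⟫)^2
          + 2*(m:ℝ) * (Q (V j) x)^(m-1) * (Q (V j) (b i))))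
      = ∑ i : Fin d, Cc * ((m:ℝ) * ((m-1:ℕ):ℝ) * (‖x‖^2)^(m-1-1) * (2*⟪x, b i⟫)^2
          + 2*(m:ℝ) * (‖x‖^2)^(m-1) * (‖b i‖^2)) :=
    Finset.sum_congr rfl fun i _ => key (b i)
  have hnormb : ∀ i, ‖b i‖^2 = (1:ℝ) := by
    intro i
    have := (EuclideanSpace.basisFun (Fin d) ℝ).orthonormal.1 i
    rw [hb, this]; norm_num
  have hL : ∑ i : Fin d, (∑ j, ω j * ((m:ℝ) * ((m-1:ℕ):ℝ) * (Q (V j) x)^(m-1-1) * (2*⟪proj (V j) x, b i⟫)^2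
          + 2*(m:ℝ) * (Q (V j) x)^(m-1) * (Q (V j) (b i))))
      = ∑ j, ω j * (4*(m:ℝ) * ((m-1:ℕ):ℝ) * ((Q (V j) x)^(m-1-1) * (Q (V j) x))
          + 2*(m:ℝ) * (Q (V j) x)^(m-1) * k) := by
    rw [Finset.sum_comm]
    refine Finset.sum_congr rfl fun j _ => ?_
    have hs1 : ∑ i : Fin d, ⟪proj (V j) x, b i⟫^2 = Q (V j) x := by
      rw [sum_inner_onb_sq]; rfl
    have hs2 : ∑ i : Fin d, Q (V j) (b i) = (k:ℝ) := by
      rw [hb, trace_Q, hVdim]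
    calc ∑ i : Fin d, ω j * ((m:ℝ) * ((m-1:ℕ):ℝ) * (Q (V j) x)^(m-1-1) * (2*⟪proj (V j) x, b i⟫)^2
            + 2*(m:ℝ) * (Q (V j) x)^(m-1) * (Q (V j) (b i)))
        = ∑ i : Fin d, ((ω j * (4*(m:ℝ) * ((m-1:ℕ):ℝ) * (Q (V j) x)^(m-1-1))) * ⟪proj (V j) x, b i⟫^2
            + (ω j * (2*(m:ℝ) * (Q (V j) x)^(m-1))) * Q (V j) (b i)) :=
          Finset.sum_congr rfl fun i _ => by ring
    _ = (ω j * (4*(m:ℝ) * ((m-1:ℕ):ℝ) * (Q (V j) x)^(m-1-1))) * (∑ i : Fin d, ⟪proj (V j) x, b i⟫^2)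
            + (ω j * (2*(m:ℝ) * (Q (V j) x)^(m-1))) * (∑ i : Fin d, Q (V j) (b i)) := by
          rw [Finset.sum_add_distrib, Finset.mul_sum, Finset.mul_sum]
    _ = ω j * (4*(m:ℝ) * ((m-1:ℕ):ℝ) * ((Q (V j) x)^(m-1-1) * (Q (V j) x)) + 2*(m:ℝ) * (Q (V j) x)^(m-1) * k) := by
          rw [hs1, hs2]; ring
  have hR : ∑ i : Fin d, Cc * ((m:ℝ) * ((m-1:ℕ):ℝ) * (‖x‖^2)^(m-1-1) * (2*⟪x, b i⟫)^2
          + 2*(m:ℝ) * (‖x‖^2)^(m-1) * (‖b i‖^2))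
      = Cc * (4*(m:ℝ) * ((m-1:ℕ):ℝ) * ((‖x‖^2)^(m-1-1) * ‖x‖^2) + 2*(m:ℝ) * (‖x‖^2)^(m-1) * d) := by
    have hs1 : ∑ i : Fin d, ⟪x, b i⟫^2 = ‖x‖^2 := sum_inner_onb_sq _ _
    calc ∑ i : Fin d, Cc * ((m:ℝ) * ((m-1:ℕ):ℝ) * (‖x‖^2)^(m-1-1) * (2*⟪x, b i⟫)^2
            + 2*(m:ℝ) * (‖x‖^2)^(m-1) * (‖b i‖^2))
        = ∑ i : Fin d, ((Cc * (4*(m:ℝ) * ((m-1:ℕ):ℝ) * (‖x‖^2)^(m-1-1))) * ⟪x, b i⟫^2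
            + (Cc * (2*(m:ℝ) * (‖x‖^2)^(m-1))) * ‖b i‖^2) :=
          Finset.sum_congr rfl fun i _ => by ring
    _ = (Cc * (4*(m:ℝ) * ((m-1:ℕ):ℝ) * (‖x‖^2)^(m-1-1))) * (∑ i : Fin d, ⟪x, b i⟫^2)
            + (Cc * (2*(m:ℝ) * (‖x‖^2)^(m-1))) * (∑ i : Fin d, ‖b i‖^2) := by
          rw [Finset.sum_add_distrib, Finset.mul_sum, Finset.mul_sum]
    _ = Cc * (4*(m:ℝ) * ((m-1:ℕ):ℝ) * ((‖x‖^2)^(m-1-1) * ‖x‖^2) + 2*(m:ℝ) * (‖x‖^2)^(m-1) * d) := by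
          rw [hs1]
          simp_rw [hnormb]
          rw [Finset.sum_const]
          simp
          ring
  rw [hL, hR] at hsum
  have hfix : ∀ A : ℝ, 4*(m:ℝ) * ((m-1:ℕ):ℝ) * (A^(m-1-1) * A) = 4*(m:ℝ) * (((m-1:ℕ):ℝ) * A^(m-1)) := by
    intro A
    have := pow_fix A m hm
    calc 4*(m:ℝ) * ((m-1:ℕ):ℝ) * (A^(m-1-1) * A) = 4*(m:ℝ) * (((m-1:ℕ):ℝ) * A^(m-1-1) * A) := by ring
    _ = 4*(m:ℝ) * (((m-1:ℕ):ℝ) * A^(m-1)) := by rw [this]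
  simp_rw [hfix] at hsum
  have hc1pos : (0:ℝ) < 4*(m:ℝ)*((m-1:ℕ):ℝ) + 2*(m:ℝ)*(k:ℝ) := by
    have h1 : (0:ℝ) ≤ 4*(m:ℝ)*((m-1:ℕ):ℝ) := by positivity
    have h2 : (0:ℝ) < 2*(m:ℝ)*(k:ℝ) := by
      have hm' : (1:ℝ) ≤ (m:ℝ) := by exact_mod_cast hm
      have hk' : (1:ℝ) ≤ (k:ℝ) := by exact_mod_cast hk
      nlinarith
    linarith
  have hfinal : (∑ j, ω j * (Q (V j) x)^(m-1)) * (4*(m:ℝ)*((m-1:ℕ):ℝ) + 2*(m:ℝ)*(k:ℝ))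
      = Cc * (4*(m:ℝ)*((m-1:ℕ):ℝ) + 2*(m:ℝ)*(d:ℝ)) * (‖x‖^2)^(m-1) := by
    rw [Finset.sum_mul]
    calc ∑ j, ω j * (Q (V j) x)^(m-1) * (4*(m:ℝ)*((m-1:ℕ):ℝ) + 2*(m:ℝ)*(k:ℝ))
        = ∑ j, ω j * (4*(m:ℝ) * (((m-1:ℕ):ℝ) * (Q (V j) x)^(m-1)) + 2*(m:ℝ) * (Q (V j) x)^(m-1) * k) := by
          refine Finset.sum_congr rfl fun j _ => ?_; ring
    _ = Cc * (4*(m:ℝ) * (((m-1:ℕ):ℝ) * (‖x‖^2)^(m-1)) + 2*(m:ℝ) * (‖x‖^2)^(m-1) * d) := hsum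
    _ = Cc * (4*(m:ℝ)*((m-1:ℕ):ℝ) + 2*(m:ℝ)*(d:ℝ)) * (‖x‖^2)^(m-1) := by ring
  have hcast : ((m-1:ℕ):ℝ) = (m:ℝ) - 1 := by
    have := Nat.cast_sub (R := ℝ) hm
    simpa using this
  rw [hcast] at hfinal hc1pos
  rw [hcast, div_mul_eq_mul_div, eq_div_iff (ne_of_gt hc1pos)]
  linear_combination hfinal

end Stmt12Aux

open Stmt12Aux

theorem stmt12 {d n k : ℕ} (p : ℕ) (hp : 1 ≤ p) (hk1 : 1 ≤ k) (hk2 : k ≤ d - 1)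
    (V : Fin n → Submodule ℝ (EuclideanSpace ℝ (Fin d)))
    (hVdim : ∀ j, Module.finrank ℝ (V j) = k)
    (ω : Fin n → ℝ) (hω : ∀ j, 0 < ω j)
    (A : ℝ) (hA : 0 < A)
    (h : ∀ x : EuclideanSpace ℝ (Fin d),
      ∑ j, ω j * ‖proj (V j) x‖ ^ (2 * p) = A * ‖x‖ ^ (2 * p)) :
    ∃ B : ℝ, 0 < B ∧ ∀ x : EuclideanSpace ℝ (Fin d),
      ∑ j, ω j * ‖proj (V j)ᗮ x‖ ^ (2 * p) = B * ‖x‖ ^ (2 * p) := by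
  have hd : 2 ≤ d := by omega
  -- restate the hypothesis in terms of Q
  have h' : ∀ x : EuclideanSpace ℝ (Fin d),
      ∑ j, ω j * (Q (V j) x)^p = A * (‖x‖^2)^p := by
    intro x
    have := h x
    simpa [Q, pow_mul] using this
  -- all lower moments are tight
  have moments : ∀ t : ℕ, ∃ C : ℝ, 0 < C ∧ ∀ x : EuclideanSpace ℝ (Fin d),
      ∑ j, ω j * (Q (V j) x)^(p - t) = C * (‖x‖^2)^(p - t) := by
    intro t
    induction t with
    | zero => exact ⟨A, hA, by simpa using h'⟩
    | succ t ih =>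
      obtain ⟨C, hC, hident⟩ := ih
      rcases Nat.eq_zero_or_pos (p - t) with ht | ht
      · refine ⟨C, hC, ?_⟩
        have : p - (t+1) = p - t := by omega
        rw [this]; exact hident
      · set m := p - t with hmdef
        have hdesc := descent hk1 V hVdim ω m ht C hident
        refine ⟨C * (4*(m:ℝ)*((m-1:ℕ):ℝ)+2*m*d) / (4*(m:ℝ)*((m-1:ℕ):ℝ)+2*m*k), ?_, ?_⟩
        · have hm' : (1:ℝ) ≤ (m:ℝ) := by exact_mod_cast ht
          have hk' : (1:ℝ) ≤ (k:ℝ) := by exact_mod_cast hk1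
          have hd' : (1:ℝ) ≤ (d:ℝ) := by
            have : (1:ℕ) ≤ d := by omega
            exact_mod_cast this
          have h0 : (0:ℝ) ≤ ((m-1:ℕ):ℝ) := by positivity
          have hstuff : (0:ℝ) < 4*(m:ℝ)*((m-1:ℕ):ℝ)+2*m*d := by nlinarith
          have hnum : (0:ℝ) < C * (4*(m:ℝ)*((m-1:ℕ):ℝ)+2*m*d) := mul_pos hC hstuff
          have hden : (0:ℝ) < 4*(m:ℝ)*((m-1:ℕ):ℝ)+2*m*k := by nlinarith
          positivity
        · have hsub : p - (t+1) = m - 1 := by omega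
          rw [hsub]
          exact hdesc
  choose Cf hCpos hCf using moments
  -- the candidate constant
  set B : ℝ := ∑ i ∈ Finset.range (p+1), (-1:ℝ)^(i+p) * (p.choose i) * Cf i with hB
  have hmain : ∀ x : EuclideanSpace ℝ (Fin d),
      ∑ j, ω j * ‖proj (V j)ᗮ x‖ ^ (2 * p) = B * ‖x‖ ^ (2 * p) := by
    intro x
    have hperp : ∀ j, ‖proj (V j)ᗮ x‖ ^ (2*p) = (‖x‖^2 - Q (V j) x)^p := by
      intro j
      rw [pow_mul, pythag]
    calc ∑ j, ω j * ‖proj (V j)ᗮ x‖ ^ (2 * p)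
        = ∑ j, ω j * (‖x‖^2 - Q (V j) x)^p := by
          refine Finset.sum_congr rfl fun j _ => ?_; rw [hperp]
    _ = ∑ j, ω j * ∑ i ∈ Finset.range (p+1),
          (-1:ℝ)^(i+p) * (‖x‖^2)^i * (Q (V j) x)^(p-i) * (p.choose i) := by
          refine Finset.sum_congr rfl fun j _ => ?_
          rw [sub_pow]
    _ = ∑ i ∈ Finset.range (p+1), (-1:ℝ)^(i+p) * (p.choose i) * (‖x‖^2)^i *
          (∑ j, ω j * (Q (V j) x)^(p-i)) := by
          simp_rw [Finset.mul_sum]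
          rw [Finset.sum_comm]
          refine Finset.sum_congr rfl fun i _ => ?_
          refine Finset.sum_congr rfl fun j _ => ?_
          ring
    _ = ∑ i ∈ Finset.range (p+1), (-1:ℝ)^(i+p) * (p.choose i) * Cf i * (‖x‖^2)^p := by
          refine Finset.sum_congr rfl fun i hi => ?_
          have hip : i ≤ p := by
            have := Finset.mem_range.mp hi; omega
          rw [hCf i x]
          have hpow : (‖x‖^2)^i * (‖x‖^2)^(p-i) = (‖x‖^2)^p := by
            rw [← pow_add]
            congr 1
            omega
          calc (-1:ℝ)^(i+p) * (p.choose i) * (‖x‖^2)^i * (Cf i * (‖x‖^2)^(p-i))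
              = (-1:ℝ)^(i+p) * (p.choose i) * Cf i * ((‖x‖^2)^i * (‖x‖^2)^(p-i)) := by ring
          _ = (-1:ℝ)^(i+p) * (p.choose i) * Cf i * (‖x‖^2)^p := by rw [hpow]
    _ = B * ‖x‖ ^ (2*p) := by
          rw [← Finset.sum_mul, hB, pow_mul]
  -- positivity of B
  have hn : 0 < n := by
    by_contra hn0
    have hn0' : n = 0 := by omega
    subst hn0'
    set x₀ : EuclideanSpace ℝ (Fin d) := EuclideanSpace.single ⟨0, by omega⟩ 1 with hx₀
    have hno : ‖x₀‖ = 1 := by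
      rw [hx₀, EuclideanSpace.norm_single]; norm_num
    have := h x₀
    rw [hno] at this
    simp at this
    nlinarith [this]
  set j₀ : Fin n := ⟨0, hn⟩ with hj₀
  have hVne : V j₀ ≠ ⊤ := by
    intro hcon
    have h1 : Module.finrank ℝ (V j₀) = d := by
      rw [hcon]
      simpa using finrank_euclideanSpace (𝕜 := ℝ) (n := Fin d)
    rw [hVdim j₀] at h1
    omega
  have hx1 : ∃ x₁ : EuclideanSpace ℝ (Fin d), x₁ ∉ V j₀ := by
    by_contra hcon
    push_neg at hcon
    exact hVne (Submodule.eq_top_iff'.mpr hcon)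
  obtain ⟨x₁, hx₁⟩ := hx1
  have hx1ne : x₁ ≠ 0 := by
    intro h0; rw [h0] at hx₁; exact hx₁ (Submodule.zero_mem _)
  have hperp_pos : 0 < ‖proj (V j₀)ᗮ x₁‖ := by
    rw [norm_pos_iff]
    intro h0
    have h1 : proj (V j₀)ᗮ x₁ = x₁ - proj (V j₀) x₁ := by
      simp [proj, Submodule.starProjection_orthogonal_val]
    rw [h1, sub_eq_zero] at h0
    rw [h0] at hx₁
    exact hx₁ (proj_mem _ _)
  have hBpos : 0 < B := by
    have hid := hmain x₁
    have hlb : ω j₀ * ‖proj (V j₀)ᗮ x₁‖ ^ (2*p) ≤ ∑ j, ω j * ‖proj (V j)ᗮ x₁‖ ^ (2*p) := by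
      refine Finset.single_le_sum (f := fun j => ω j * ‖proj (V j)ᗮ x₁‖ ^ (2*p)) ?_ (Finset.mem_univ j₀)
      intro j _
      have := (hω j).le
      positivity
    have hterm : 0 < ω j₀ * ‖proj (V j₀)ᗮ x₁‖ ^ (2*p) := by
      have := hω j₀
      positivity
    have hxnorm : 0 < ‖x₁‖ ^ (2*p) := by
      have : 0 < ‖x₁‖ := norm_pos_iff.mpr hx1ne
      positivity
    nlinarith [hid, hlb, hterm, hxnorm]
  exact ⟨B, hBpos, hmain⟩
end

section
/- Let p ≥ 1 be an integer, let 1 ≤ k ≤ d−1, and let {(V_j, ω_j)}_{j=1}^n be a tight p-fusion frame in ℝ^d with bound A_p in which every subspace V_j has dimension k. Then A_p = ((k/2)_p / (d/2)_p) · Σ_{j=1}^n ω_j, where (a)_p denotes the rising factorial a(a+1)⋯(a+p−1). -/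
open scoped BigOperators

open MeasureTheory Real Finset

lemma gamma_prod (a : ℝ) (ha : 0 < a) (s : ℕ) :
    Real.Gamma (a + s) = Real.Gamma a * ∏ l ∈ Finset.range s, (a + l) := by
  induction s with
  | zero => simp
  | succ n ih =>
    have : a + (n+1 : ℕ) = (a + n) + 1 := by push_cast; ring
    rw [this, Real.Gamma_add_one (by positivity), Finset.prod_range_succ, ih]
    ring

lemma gauss_moment (m s : ℕ) (hm : 0 < m) :
    ∫ x : EuclideanSpace ℝ (Fin m), ‖x‖ ^ (2*s) * Real.exp (-‖x‖^2/2)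
      = Real.sqrt (2*π) ^ m * 2^s * ∏ l ∈ Finset.range s, ((m:ℝ)/2 + l) := by
  haveI : Nonempty (Fin m) := ⟨⟨0, hm⟩⟩
  have key := integral_fun_norm_addHaar (volume : Measure (EuclideanSpace ℝ (Fin m)))
    (fun r : ℝ => r ^ (2*s) * Real.exp (-r^2/2))
  rw [finrank_euclideanSpace_fin] at key
  rw [key]
  -- volume of unit ball
  have hvol : ((volume : Measure (EuclideanSpace ℝ (Fin m))) (Metric.ball 0 1)).toReal
      = Real.sqrt π ^ m / Real.Gamma (m/2 + 1) := by
    rw [EuclideanSpace.volume_ball]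
    simp only [Fintype.card_fin, ENNReal.ofReal_one, one_pow, one_mul]
    rw [ENNReal.toReal_ofReal (by positivity)]
  rw [measureReal_def, hvol]
  -- inner integral
  have hq : (-1 : ℝ) < (m - 1 + 2*s : ℕ) := by
    have := Nat.cast_nonneg (α := ℝ) (m - 1 + 2*s); linarith
  have hinner : (∫ y in Set.Ioi (0:ℝ), y ^ (m-1) • ((fun r : ℝ => r ^ (2*s) * Real.exp (-r^2/2)) y))
      = ∫ y in Set.Ioi (0:ℝ), y ^ (((m - 1 + 2*s : ℕ)) : ℝ) * Real.exp (-(1/2) * y ^ (2:ℝ)) := by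
    refine setIntegral_congr_fun measurableSet_Ioi (fun y hy => ?_)
    have hy0 : (0:ℝ) < y := hy
    simp only [smul_eq_mul]
    rw [Real.rpow_natCast, Real.rpow_two, pow_add, ← mul_assoc]
    ring_nf
  rw [hinner, integral_rpow_mul_exp_neg_mul_rpow two_pos hq one_half_pos]
  -- now pure algebra
  have hcast : ((m - 1 + 2*s : ℕ) : ℝ) + 1 = (m : ℝ) + 2*s := by
    have : (m - 1 + 2*s : ℕ) = m + 2*s - 1 := by omega
    rw [this]
    push_cast [Nat.cast_sub (by omega : 1 ≤ m + 2*s)]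
    ring
  rw [hcast]
  set a : ℝ := (m:ℝ)/2 with ha_def
  have ha : 0 < a := by positivity
  have h1 : ((m:ℝ) + 2*s)/2 = a + s := by field_simp [ha_def]; ring
  have h2 : Real.Gamma (a + s) = Real.Gamma a * ∏ l ∈ Finset.range s, (a + l) := gamma_prod a ha s
  have h3 : Real.Gamma ((m:ℝ)/2 + 1) = a * Real.Gamma a := by
    rw [← ha_def, Real.Gamma_add_one (ne_of_gt ha)]
  have h4 : ((1:ℝ)/2) ^ (-((m:ℝ) + 2*s)/2) = 2 ^ a * 2 ^ s := by
    rw [one_div, ← Real.rpow_neg_one (2:ℝ), ← Real.rpow_natCast (2:ℝ)]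
    rw [← Real.rpow_mul (by norm_num), ← Real.rpow_add two_pos]
    congr 1
    rw [← h1]; ring
  have h5 : Real.sqrt (2*π) ^ m = 2 ^ a * Real.sqrt π ^ m := by
    rw [Real.sqrt_mul (by norm_num), mul_pow]
    congr 1
    rw [Real.sqrt_eq_rpow, ← Real.rpow_natCast (2 ^ ((1:ℝ)/2)) m, ← Real.rpow_mul (by norm_num)]
    congr 1
    rw [ha_def]; ring
  have hΓa : Real.Gamma a ≠ 0 := ne_of_gt (Real.Gamma_pos_of_pos ha)
  rw [h1, h2, h3, h4, h5, nsmul_eq_mul, smul_eq_mul]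
  have hm2 : (m:ℝ) = 2 * a := by rw [ha_def]; ring
  field_simp
  rw [hm2]
  ring

lemma aux_pow_le (u : ℝ) (hu : 0 ≤ u) (s : ℕ) : u ^ s ≤ s.factorial * Real.exp u := by
  have h := Real.sum_le_exp_of_nonneg hu (s+1)
  have h2 : u ^ s / s.factorial ≤ Real.exp u :=
    le_trans (Finset.single_le_sum (f := fun i => u ^ i / i.factorial)
      (fun i _ => by positivity) (Finset.self_mem_range_succ s)) h
  calc u ^ s = s.factorial * (u ^ s / s.factorial) := by field_simp
    _ ≤ s.factorial * Real.exp u := mul_le_mul_of_nonneg_left h2 (by positivity)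

lemma integrable_exp_quarter (m : ℕ) :
    Integrable (fun x : EuclideanSpace ℝ (Fin m) => Real.exp (-(1/4 : ℝ) * ‖x‖^2)) := by
  have hc : Integrable (fun v : EuclideanSpace ℝ (Fin m) =>
      Complex.exp (-(1/4 : ℂ) * (‖v‖:ℂ)^2 + 0 * (inner ℝ (0 : EuclideanSpace ℝ (Fin m)) v : ℝ))) :=
    GaussianFourier.integrable_cexp_neg_mul_sq_norm_add (by norm_num) 0 0
  have := hc.re
  refine this.congr (Filter.Eventually.of_forall fun x => ?_)
  simp only [zero_mul, add_zero]
  rw [show (-(1/4 : ℂ) * (‖x‖:ℂ)^2) = ((-(1/4 : ℝ) * ‖x‖^2 : ℝ) : ℂ) by push_cast; ring,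
    ← Complex.ofReal_exp]
  exact Complex.ofReal_re _

lemma integrable_gauss (m s : ℕ) :
    Integrable (fun x : EuclideanSpace ℝ (Fin m) => ‖x‖ ^ (2*s) * Real.exp (-‖x‖^2/2)) := by
  have hmeas : AEStronglyMeasurable
      (fun x : EuclideanSpace ℝ (Fin m) => ‖x‖ ^ (2*s) * Real.exp (-‖x‖^2/2)) volume := by
    apply Continuous.aestronglyMeasurable
    continuity
  refine (((integrable_exp_quarter m).const_mul ((4:ℝ)^s * s.factorial)).mono' hmeas
    (Filter.Eventually.of_forall fun x => ?_))
  have h1 : ‖x‖ ^ (2*s) ≤ 4^s * s.factorial * Real.exp (‖x‖^2/4) := by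
    have := aux_pow_le (‖x‖^2/4) (by positivity) s
    calc ‖x‖ ^ (2*s) = (‖x‖^2)^s := by rw [← pow_mul]
      _ = 4^s * (‖x‖^2/4)^s := by rw [div_pow]; field_simp
      _ ≤ 4^s * (s.factorial * Real.exp (‖x‖^2/4)) := by
          exact mul_le_mul_of_nonneg_left this (by positivity)
      _ = 4^s * s.factorial * Real.exp (‖x‖^2/4) := by ring
  rw [Real.norm_eq_abs, abs_of_nonneg (by positivity)]
  calc ‖x‖ ^ (2*s) * Real.exp (-‖x‖^2/2)
      ≤ (4^s * s.factorial * Real.exp (‖x‖^2/4)) * Real.exp (-‖x‖^2/2) :=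
        mul_le_mul_of_nonneg_right h1 (le_of_lt (Real.exp_pos _))
    _ = 4^s * s.factorial * Real.exp (-(1/4) * ‖x‖^2) := by
        rw [mul_assoc, ← Real.exp_add]; ring_nf



lemma euclid_normsq (m : ℕ) (x : EuclideanSpace ℝ (Fin m)) : ‖x‖^2 = ∑ i, x i ^ 2 := by
  rw [EuclideanSpace.norm_eq, Real.sq_sqrt (by positivity)]
  simp [sq_abs]

lemma integral_pi_euclid (m : ℕ) (Φ : (Fin m → ℝ) → ℝ) :
    ∫ z : Fin m → ℝ, Φ z = ∫ x : EuclideanSpace ℝ (Fin m), Φ (fun i => x i) :=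
  ((EuclideanSpace.volume_preserving_symm_measurableEquiv_toLp (Fin m)).integral_comp
    (MeasurableEquiv.measurableEmbedding _) Φ).symm

lemma proj_integral {d : ℕ} (k p : ℕ) (hk : 0 < k) (hkd : k < d)
    (V : Submodule ℝ (EuclideanSpace ℝ (Fin d))) (hV : Module.finrank ℝ V = k) :
    ∫ x : EuclideanSpace ℝ (Fin d), ‖proj V x‖ ^ (2*p) * Real.exp (-‖x‖^2/2)
    = (∫ x : EuclideanSpace ℝ (Fin k), ‖x‖ ^ (2*p) * Real.exp (-‖x‖^2/2)) *
      (∫ x : EuclideanSpace ℝ (Fin (d-k)), Real.exp (-‖x‖^2/2)) := by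
  classical
  -- adapted orthonormal basis
  let b₀ : OrthonormalBasis (Fin k) ℝ V := (stdOrthonormalBasis ℝ V).reindex (finCongr hV)
  set v : Fin d → EuclideanSpace ℝ (Fin d) :=
    fun i => if h : (i : ℕ) < k then (b₀ ⟨i, h⟩ : EuclideanSpace ℝ (Fin d)) else 0 with hv
  have h1 : Orthonormal ℝ (fun j : Fin k => (b₀ j : EuclideanSpace ℝ (Fin d))) := by
    have := b₀.orthonormal
    rw [orthonormal_iff_ite] at this ⊢
    intro i j
    have := this i j
    rwa [Submodule.coe_inner] at this
  have horth : Orthonormal ℝ (({i : Fin d | (i : ℕ) < k}).restrict v) := by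
    have hf : Function.Injective (fun i : {i : Fin d | (i : ℕ) < k} => (⟨(i : Fin d), i.2⟩ : Fin k)) := by
      intro a b hab
      simp only [Fin.mk.injEq] at hab
      exact Subtype.ext (Fin.ext hab)
    have := h1.comp _ hf
    convert this using 1
    funext i
    simp only [Set.restrict_apply, Function.comp]
    rw [hv]
    exact dif_pos i.2
  obtain ⟨b, hb⟩ := horth.exists_orthonormalBasis_extension_of_card_eq
    (by simp [finrank_euclideanSpace_fin])
  -- basis vectors with small index lie in V and agree with b₀
  have hbv : ∀ j : Fin k, b (Fin.castLE hkd.le j) = (b₀ j : EuclideanSpace ℝ (Fin d)) := by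
    intro j
    have hmem : (Fin.castLE hkd.le j : Fin d) ∈ {i : Fin d | (i : ℕ) < k} := j.2
    rw [hb _ hmem, hv]
    simp only []
    rw [dif_pos (show ((Fin.castLE hkd.le j : Fin d) : ℕ) < k from j.2)]
    exact congrArg (fun t => ((b₀ t : V) : EuclideanSpace ℝ (Fin d))) (Fin.ext rfl)
  -- pointwise identities
  have hproj : ∀ x : EuclideanSpace ℝ (Fin d),
      ‖proj V x‖^2 = ∑ j : Fin k, (b.repr x (Fin.castLE hkd.le j))^2 := by
    intro x
    have h0 : proj V x = ((V.orthogonalProjectionOnto x : V) : EuclideanSpace ℝ (Fin d)) := rfl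
    have h2 : ‖proj V x‖ = ‖b₀.repr (V.orthogonalProjectionOnto x)‖ := by
      rw [h0, b₀.repr.norm_map]
      rfl
    rw [h2, euclid_normsq]
    refine Finset.sum_congr rfl fun j _ => ?_
    rw [b₀.repr_apply_apply, Submodule.inner_orthogonalProjectionOnto_eq_of_mem_left,
      b.repr_apply_apply, hbv j]
  have hnorm : ∀ x : EuclideanSpace ℝ (Fin d), ‖x‖^2 = ∑ i, (b.repr x i)^2 := by
    intro x
    rw [show ‖x‖ = ‖b.repr x‖ from (b.repr.norm_map x).symm, euclid_normsq]
  -- the integrand as a function of coordinates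
  set F : EuclideanSpace ℝ (Fin d) → ℝ := fun y =>
    (∑ j : Fin k, (y (Fin.castLE hkd.le j))^2)^p * Real.exp (-(∑ i, (y i)^2)/2) with hF
  have step1 : ∫ x : EuclideanSpace ℝ (Fin d), ‖proj V x‖ ^ (2*p) * Real.exp (-‖x‖^2/2)
      = ∫ x : EuclideanSpace ℝ (Fin d), F (b.repr x) := by
    congr 1
    funext x
    rw [hF]
    simp only []
    rw [pow_mul, hproj x, hnorm x]
  rw [step1, b.measurePreserving_repr.integral_comp
    b.repr.toHomeomorph.measurableEmbedding F]
  -- now F on EuclideanSpace; move to the pi measure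
  have step2 : ∫ y : EuclideanSpace ℝ (Fin d), F y
      = ∫ z : Fin d → ℝ,
        (∑ j : Fin k, (z (Fin.castLE hkd.le j))^2)^p * Real.exp (-(∑ i, (z i)^2)/2) :=
    (integral_pi_euclid d (fun z => (∑ j : Fin k, (z (Fin.castLE hkd.le j))^2)^p * Real.exp (-(∑ i, (z i)^2)/2))).symm
  rw [step2]
  -- split coordinates
  have hsum : k + (d - k) = d := Nat.add_sub_cancel' hkd.le
  let e2 : (Fin k ⊕ Fin (d-k)) ≃ Fin d := finSumFinEquiv.trans (finCongr hsum)
  set g : ((Fin k → ℝ) × (Fin (d-k) → ℝ)) → ℝ := fun z =>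
    ((∑ j, (z.1 j)^2)^p * Real.exp (-(∑ j, (z.1 j)^2)/2)) * Real.exp (-(∑ j, (z.2 j)^2)/2)
    with hg
  have step3 : ∫ z : Fin d → ℝ,
        (∑ j : Fin k, (z (Fin.castLE hkd.le j))^2)^p * Real.exp (-(∑ i, (z i)^2)/2)
      = ∫ w : (Fin k ⊕ Fin (d-k)) → ℝ, g (MeasurableEquiv.sumPiEquivProdPi (fun _ => ℝ) w) := by
    rw [← (volume_measurePreserving_piCongrLeft (fun _ : Fin d => ℝ) e2).integral_comp
      (MeasurableEquiv.measurableEmbedding _) _]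
    congr 1
    funext w
    have hcoord : ∀ j : Fin k,
        (MeasurableEquiv.piCongrLeft (fun _ : Fin d => ℝ) e2 w) (Fin.castLE hkd.le j)
        = w (Sum.inl j) := by
      intro j
      have : Fin.castLE hkd.le j = e2 (Sum.inl j) := by
        apply Fin.ext
        simp [e2, finSumFinEquiv]
      rw [this, MeasurableEquiv.piCongrLeft_apply_apply]
    have hall : ∑ i, ((MeasurableEquiv.piCongrLeft (fun _ : Fin d => ℝ) e2 w) i)^2
        = (∑ j, (w (Sum.inl j))^2) + ∑ j, (w (Sum.inr j))^2 := by
      rw [← Fintype.sum_sum_type (fun a : Fin k ⊕ Fin (d-k) => w a ^ 2)]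
      exact (Fintype.sum_equiv e2 (fun a => w a ^ 2) _ fun a => by
        rw [MeasurableEquiv.piCongrLeft_apply_apply]).symm
    simp only [hg]
    rw [hall]
    have : ∀ j : Fin k, (MeasurableEquiv.sumPiEquivProdPi (fun _ => ℝ) w).1 j = w (Sum.inl j) :=
      fun j => rfl
    have h2 : ∀ j : Fin (d-k),
        (MeasurableEquiv.sumPiEquivProdPi (fun _ => ℝ) w).2 j = w (Sum.inr j) := fun j => rfl
    simp only [this, h2, hcoord]
    rw [mul_assoc, ← Real.exp_add]
    congr 1
    ring
  have hprod : (∫ y : (Fin k → ℝ) × (Fin (d-k) → ℝ), g y)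
      = (∫ u : Fin k → ℝ, (∑ j, (u j)^2)^p * Real.exp (-(∑ j, (u j)^2)/2)) *
        (∫ u : Fin (d-k) → ℝ, Real.exp (-(∑ j, (u j)^2)/2)) := by
    rw [Measure.volume_eq_prod]
    exact MeasureTheory.integral_prod_mul
      (f := fun u : Fin k → ℝ => (∑ j, (u j)^2)^p * Real.exp (-(∑ j, (u j)^2)/2))
      (g := fun u : Fin (d-k) → ℝ => Real.exp (-(∑ j, (u j)^2)/2))
  rw [step3, (volume_measurePreserving_sumPiEquivProdPi (fun _ : Fin k ⊕ Fin (d-k) => ℝ)).integral_comp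
    (MeasurableEquiv.measurableEmbedding _) g, hprod]
  congr 1
  · rw [integral_pi_euclid k (fun u => (∑ j, (u j)^2)^p * Real.exp (-(∑ j, (u j)^2)/2))]
    congr 1
    funext x
    rw [pow_mul, euclid_normsq]
  · rw [integral_pi_euclid (d-k) (fun u => Real.exp (-(∑ j, (u j)^2)/2))]
    congr 1
    funext x
    rw [euclid_normsq]

theorem stmt13 {d n k : ℕ} (p : ℕ) (hp : 1 ≤ p) (hk1 : 1 ≤ k) (hk2 : k ≤ d - 1)
    (V : Fin n → Submodule ℝ (EuclideanSpace ℝ (Fin d)))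
    (hVdim : ∀ j, Module.finrank ℝ (V j) = k)
    (ω : Fin n → ℝ) (hω : ∀ j, 0 < ω j)
    (A : ℝ) (hA : 0 < A)
    (h : ∀ x : EuclideanSpace ℝ (Fin d),
      ∑ j, ω j * ‖proj (V j) x‖ ^ (2 * p) = A * ‖x‖ ^ (2 * p)) :
    A = (∏ l ∈ Finset.range p, ((k : ℝ) / 2 + l)) / (∏ l ∈ Finset.range p, ((d : ℝ) / 2 + l)) *
      ∑ j, ω j := by
  have hd2 : 2 ≤ d := by omega
  have hkd : k < d := by omega
  have hmul : ∀ x : EuclideanSpace ℝ (Fin d),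
      ∑ j, ω j * (‖proj (V j) x‖ ^ (2*p) * Real.exp (-‖x‖^2/2))
      = A * (‖x‖ ^ (2*p) * Real.exp (-‖x‖^2/2)) := by
    intro x
    have := congrArg (fun t => t * Real.exp (-‖x‖^2/2)) (h x)
    simpa [Finset.sum_mul, mul_assoc] using this
  have hprojle : ∀ (j : Fin n) (x : EuclideanSpace ℝ (Fin d)), ‖proj (V j) x‖ ≤ ‖x‖ := by
    intro j x
    have h1 : ‖proj (V j) x‖ = ‖(V j).orthogonalProjectionOnto x‖ := rfl
    rw [h1]
    calc ‖(V j).orthogonalProjectionOnto x‖ ≤ ‖(V j).orthogonalProjectionOnto‖ * ‖x‖ :=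
          ((V j).orthogonalProjectionOnto).le_opNorm x
      _ ≤ 1 * ‖x‖ := mul_le_mul_of_nonneg_right (Submodule.orthogonalProjectionOnto_norm_le _) (norm_nonneg _)
      _ = ‖x‖ := one_mul _
  have hInt : ∀ j : Fin n, Integrable
      (fun x : EuclideanSpace ℝ (Fin d) =>
        ω j * (‖proj (V j) x‖ ^ (2*p) * Real.exp (-‖x‖^2/2))) := by
    intro j
    have hcontp : Continuous (proj (V j)) := (proj (V j)).continuous_of_finiteDimensional
    have hcont : Continuous (fun x : EuclideanSpace ℝ (Fin d) =>
        ω j * (‖proj (V j) x‖ ^ (2*p) * Real.exp (-‖x‖^2/2))) := by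
      fun_prop
    refine ((integrable_gauss d p).const_mul (ω j)).mono' hcont.aestronglyMeasurable
      (Filter.Eventually.of_forall fun x => ?_)
    rw [Real.norm_eq_abs, abs_of_nonneg (mul_nonneg (hω j).le (by positivity))]
    gcongr
    · exact (hω j).le
    · exact hprojle j x
  have hIk := gauss_moment k p (by omega)
  have hId := gauss_moment d p (by omega)
  have hG : ∫ x : EuclideanSpace ℝ (Fin (d-k)), Real.exp (-‖x‖^2/2)
      = Real.sqrt (2*π) ^ (d-k) := by
    have := gauss_moment (d-k) 0 (by omega)
    simpa using this
  have key : (∑ j, ω j) * ((∫ x : EuclideanSpace ℝ (Fin k), ‖x‖^(2*p) * Real.exp (-‖x‖^2/2)) *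
      (∫ x : EuclideanSpace ℝ (Fin (d-k)), Real.exp (-‖x‖^2/2)))
      = A * ∫ x : EuclideanSpace ℝ (Fin d), ‖x‖^(2*p) * Real.exp (-‖x‖^2/2) := by
    have h0 : ∫ x : EuclideanSpace ℝ (Fin d),
        (∑ j, ω j * (‖proj (V j) x‖^(2*p) * Real.exp (-‖x‖^2/2)))
        = ∑ j, ω j * ∫ x : EuclideanSpace ℝ (Fin d),
            ‖proj (V j) x‖^(2*p) * Real.exp (-‖x‖^2/2) := by
      rw [integral_finset_sum _ (fun j _ => hInt j)]
      exact Finset.sum_congr rfl fun j _ => integral_const_mul _ _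
    have h1 : ∫ x : EuclideanSpace ℝ (Fin d),
        (∑ j, ω j * (‖proj (V j) x‖^(2*p) * Real.exp (-‖x‖^2/2)))
        = ∫ x : EuclideanSpace ℝ (Fin d), A * (‖x‖^(2*p) * Real.exp (-‖x‖^2/2)) := by
      congr 1
      funext x
      exact hmul x
    rw [integral_const_mul] at h1
    rw [← h1, h0]
    rw [Finset.sum_mul]
    exact Finset.sum_congr rfl fun j _ => by
      rw [proj_integral k p (by omega) hkd (V j) (hVdim j)]
  rw [hIk, hId, hG] at key
  set S : ℝ := ∑ j, ω j with hS
  set Pk : ℝ := ∏ l ∈ Finset.range p, ((k : ℝ) / 2 + l) with hPk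
  set Pd : ℝ := ∏ l ∈ Finset.range p, ((d : ℝ) / 2 + l) with hPd
  have hPdpos : 0 < Pd := Finset.prod_pos fun l _ => by positivity
  have hsq : (0:ℝ) < Real.sqrt (2*π) := Real.sqrt_pos.mpr (by positivity)
  have hsplit : Real.sqrt (2*π) ^ k * Real.sqrt (2*π) ^ (d-k) = Real.sqrt (2*π) ^ d := by
    rw [← pow_add]
    congr 1
    omega
  have key2 : A * Pd = S * Pk := by
    have hC : (0:ℝ) < Real.sqrt (2*π) ^ d * 2^p := by positivity
    apply mul_left_cancel₀ (ne_of_gt hC)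
    calc Real.sqrt (2*π) ^ d * 2^p * (A * Pd)
        = A * (Real.sqrt (2*π) ^ d * 2^p * Pd) := by ring
      _ = S * (Real.sqrt (2*π) ^ k * 2^p * Pk * Real.sqrt (2*π) ^ (d-k)) := key.symm
      _ = (Real.sqrt (2*π) ^ k * Real.sqrt (2*π) ^ (d-k)) * 2^p * (S * Pk) := by ring
      _ = Real.sqrt (2*π) ^ d * 2^p * (S * Pk) := by rw [hsplit]
  rw [div_mul_eq_mul_div, eq_div_iff (ne_of_gt hPdpos), key2]
  ring
end

section
/- Let p ≥ 1 be an integer, let d ≥ 2, and let G be a finite subgroup of the orthogonal group O(d) acting on ℝ^d. Then the following are equivalent: (1) for every k with 1 ≤ k < d and every k-dimensional linear subspace V of ℝ^d, the family {g·V}_{g∈G} (indexed by g ∈ G, each with weight 1) is a tight p-fusion frame, i.e. there is a constant A > 0 with Σ_{g∈G} ‖P_{g·V}(x)‖^{2p} = A‖x‖^{2p} for all x ∈ ℝ^d; (2) every homogeneous polynomial function P : ℝ^d → ℝ of degree 2p satisfying P(g x) = P(x) for all g ∈ G and x ∈ ℝ^d is a scalar multiple of x ↦ (x_1² + ⋯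 + x_d²)^p. -/
open scoped BigOperators

section Aux

open MvPolynomial Finset

/-- The apolar pairing of two polynomials. -/
noncomputable def Lpair {d : ℕ} (P Q : MvPolynomial (Fin d) ℝ) : ℝ :=
  ∑ α ∈ P.support, ((∏ i, (α i).factorial : ℕ) : ℝ) * P.coeff α * Q.coeff α

lemma Lpair_sum {d : ℕ} (P : MvPolynomial (Fin d) ℝ) {ι : Type*} (s : Finset ι)
    (Q : ι → MvPolynomial (Fin d) ℝ) :
    Lpair P (∑ g ∈ s, Q g) = ∑ g ∈ s, Lpair P (Q g) := by
  unfold Lpair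
  simp_rw [MvPolynomial.coeff_sum, Finset.mul_sum]
  exact Finset.sum_comm

lemma Lpair_smul {d : ℕ} (P Q : MvPolynomial (Fin d) ℝ) (c : ℝ) :
    Lpair P (c • Q) = c * Lpair P Q := by
  unfold Lpair
  rw [Finset.mul_sum]
  refine Finset.sum_congr rfl fun α _ => ?_
  rw [coeff_smul, smul_eq_mul]
  ring

lemma eval_homog_smul {d n : ℕ} {P : MvPolynomial (Fin d) ℝ} (hP : P.IsHomogeneous n)
    (t : ℝ) (x : Fin d → ℝ) :
    eval (fun i => t * x i) P = t ^ n * eval x P := by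
  rw [eval_eq, eval_eq, Finset.mul_sum]
  refine Finset.sum_congr rfl fun α hα => ?_
  have hdeg : α.degree = n := by
    have := hP (mem_support_iff.mp hα)
    rw [Finsupp.degree_eq_weight_one]
    exact this
  have : ∏ i ∈ α.support, (t * x i) ^ α i
      = t ^ n * ∏ i ∈ α.support, x i ^ α i := by
    rw [← hdeg, Finsupp.degree_apply, ← Finset.prod_pow_eq_pow_sum, ← Finset.prod_mul_distrib]
    exact Finset.prod_congr rfl fun i _ => mul_pow _ _ _
  rw [this]; ring

lemma linear_pow_expand {d n : ℕ} (w : Fin d → ℝ) :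
    (∑ i, MvPolynomial.C (w i) * MvPolynomial.X i) ^ n
      = ∑ k ∈ Finset.piAntidiag Finset.univ n,
          MvPolynomial.monomial (Finsupp.equivFunOnFinite.symm k)
            ((Nat.multinomial Finset.univ k : ℝ) * ∏ i, w i ^ k i) := by
  rw [Finset.sum_pow_eq_sum_piAntidiag]
  refine Finset.sum_congr rfl fun k hk => ?_
  have h1 : ∀ i : Fin d, (MvPolynomial.C (w i) * MvPolynomial.X i) ^ k i
      = MvPolynomial.C (w i ^ k i) * MvPolynomial.X i ^ k i := by
    intro i; rw [mul_pow, map_pow]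
  simp_rw [h1]
  rw [Finset.prod_mul_distrib, ← map_prod]
  have h2 : (∏ i, (MvPolynomial.X i : MvPolynomial (Fin d) ℝ) ^ k i)
      = MvPolynomial.monomial (Finsupp.equivFunOnFinite.symm k) 1 := by
    rw [← MvPolynomial.prod_X_pow_eq_monomial]
    refine (Finset.prod_subset (Finset.subset_univ _) ?_).symm
    intro i _ hi
    have : (Finsupp.equivFunOnFinite.symm k) i = 0 := Finsupp.notMem_support_iff.mp hi
    simp only [Finsupp.coe_equivFunOnFinite_symm] at this ⊢
    simp [this]
  calc (Nat.multinomial Finset.univ k : MvPolynomial (Fin d) ℝ)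
        * (MvPolynomial.C (∏ i, w i ^ k i) * ∏ i, MvPolynomial.X i ^ k i)
      = MvPolynomial.C ((Nat.multinomial Finset.univ k : ℝ) * ∏ i, w i ^ k i)
        * MvPolynomial.monomial (Finsupp.equivFunOnFinite.symm k) 1 := by
        rw [h2, map_mul, ← MvPolynomial.C_eq_coe_nat]; ring
    _ = MvPolynomial.monomial (Finsupp.equivFunOnFinite.symm k)
          ((Nat.multinomial Finset.univ k : ℝ) * ∏ i, w i ^ k i) := by
        rw [MvPolynomial.C_mul_monomial, mul_one]

lemma Lpair_linear_pow {d n : ℕ} (P : MvPolynomial (Fin d) ℝ) (hP : P.IsHomogeneous n)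
    (w : Fin d → ℝ) :
    Lpair P ((∑ i, MvPolynomial.C (w i) * MvPolynomial.X i) ^ n)
      = (n.factorial : ℝ) * MvPolynomial.eval w P := by
  rw [linear_pow_expand, MvPolynomial.eval_eq, Finset.mul_sum]
  unfold Lpair
  refine Finset.sum_congr rfl fun α hα => ?_
  have hdeg : ∑ i, α i = n := by
    have h1 := hP (MvPolynomial.mem_support_iff.mp hα)
    have h2 : α.degree = n := by rw [Finsupp.degree_eq_weight_one]; exact h1
    rw [← h2, Finsupp.degree_apply]
    exact Finset.sum_subset (Finset.subset_univ _) (by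
      intro i _ hi
      simpa using Finsupp.notMem_support_iff.mp hi) |>.symm
  have hcoeff : MvPolynomial.coeff α
      (∑ k ∈ Finset.piAntidiag Finset.univ n,
        MvPolynomial.monomial (Finsupp.equivFunOnFinite.symm k)
          ((Nat.multinomial Finset.univ k : ℝ) * ∏ i, w i ^ k i))
      = (Nat.multinomial Finset.univ (⇑α) : ℝ) * ∏ i, w i ^ α i := by
    rw [MvPolynomial.coeff_sum]
    have hmem : (⇑α : Fin d → ℕ) ∈ Finset.piAntidiag Finset.univ n := by
      rw [Finset.mem_piAntidiag]
      exact ⟨hdeg, fun i _ => Finset.mem_univ i⟩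
    rw [Finset.sum_eq_single (⇑α : Fin d → ℕ)]
    · rw [MvPolynomial.coeff_monomial, if_pos (by simp)]
    · intro k hk hne
      rw [MvPolynomial.coeff_monomial, if_neg]
      intro h
      exact hne (by simpa using congrArg DFunLike.coe h)
    · intro h; exact absurd hmem h
  rw [hcoeff]
  have hfact : ((∏ i, (α i).factorial : ℕ) : ℝ) * (Nat.multinomial Finset.univ (⇑α) : ℝ)
      = (n.factorial : ℝ) := by
    rw [← Nat.cast_mul, Nat.multinomial_spec, hdeg]
  have hprod : ∏ i, w i ^ α i = ∏ i ∈ α.support, w i ^ α i := by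
    refine (Finset.prod_subset (Finset.subset_univ _) ?_).symm
    intro i _ hi
    simp [Finsupp.notMem_support_iff.mp hi]
  rw [hprod] at *
  calc ((∏ i, (α i).factorial : ℕ) : ℝ) * P.coeff α
        * ((Nat.multinomial Finset.univ (⇑α) : ℝ) * ∏ i ∈ α.support, w i ^ α i)
      = (((∏ i, (α i).factorial : ℕ) : ℝ) * (Nat.multinomial Finset.univ (⇑α) : ℝ))
        * (P.coeff α * ∏ i ∈ α.support, w i ^ α i) := by ring
    _ = (n.factorial : ℝ) * (P.coeff α * ∏ i ∈ α.support, w i ^ α i) := by rw [hfact]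

variable {d : ℕ}

lemma proj_apply (V : Submodule ℝ (EuclideanSpace ℝ (Fin d))) (x : EuclideanSpace ℝ (Fin d)) :
    proj V x = V.starProjection x := rfl

lemma norm_proj_span_singleton {v : EuclideanSpace ℝ (Fin d)} (hv : ‖v‖ = 1)
    (x : EuclideanSpace ℝ (Fin d)) :
    ‖proj (ℝ ∙ v) x‖ = |(inner ℝ v x : ℝ)| := by
  rw [proj_apply, Submodule.starProjection_singleton (𝕜 := ℝ), hv]
  simp [norm_smul, hv]

lemma eval_linear_pow (w x : EuclideanSpace ℝ (Fin d)) (n : ℕ) :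
    MvPolynomial.eval (fun i => x i) ((∑ i, MvPolynomial.C (w i) * MvPolynomial.X i) ^ n)
      = (inner ℝ w x : ℝ) ^ n := by
  simp [PiLp.inner_apply, RCLike.inner_apply, map_sum, mul_comm]

lemma eval_norm_pow (x : EuclideanSpace ℝ (Fin d)) (p : ℕ) :
    MvPolynomial.eval (fun i => x i) ((∑ i : Fin d, MvPolynomial.X i ^ 2) ^ p)
      = ‖x‖ ^ (2 * p) := by
  have h : (∑ i, (x i) ^ 2) = ‖x‖ ^ 2 := by
    rw [EuclideanSpace.norm_eq, Real.sq_sqrt (by positivity)]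
    simp [Real.norm_eq_abs, sq_abs]
  rw [map_pow, map_sum]
  simp only [map_pow, eval_X]
  rw [h, ← pow_mul, mul_comm 2 p, mul_comm p 2]

lemma norm_proj_sq_eq_sum {k : ℕ} (U : Submodule ℝ (EuclideanSpace ℝ (Fin d)))
    [FiniteDimensional ℝ U] (b : OrthonormalBasis (Fin k) ℝ U)
    (x : EuclideanSpace ℝ (Fin d)) :
    ‖proj U x‖ ^ 2 = ∑ j, (inner ℝ ((b j : EuclideanSpace ℝ (Fin d))) x : ℝ) ^ 2 := by
  rw [proj_apply]
  have h := b.orthogonalProjectionOnto_apply_eq_sum x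
  have hcoe : U.starProjection x
      = ∑ j, (inner ℝ ((b j : EuclideanSpace ℝ (Fin d))) x : ℝ)
          • (b j : EuclideanSpace ℝ (Fin d)) := by
    rw [Submodule.starProjection_apply, h]
    push_cast
    rfl
  have horth : Orthonormal ℝ (fun j => (b j : EuclideanSpace ℝ (Fin d))) :=
    b.orthonormal.comp_linearIsometry U.subtypeₗᵢ
  rw [hcoe, ← real_inner_self_eq_norm_sq, horth.inner_sum]
  simp [sq]

lemma exists_unit_vector {d : ℕ} (hd0 : 0 < d) :
    ∃ v : EuclideanSpace ℝ (Fin d), ‖v‖ = 1 :=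
  ⟨EuclideanSpace.single (⟨0, hd0⟩ : Fin d) (1 : ℝ), by simp [EuclideanSpace.norm_single]⟩

/-- Reinterpret a plain function as an element of Euclidean space. -/
abbrev toE {d : ℕ} (x : Fin d → ℝ) : EuclideanSpace ℝ (Fin d) := WithLp.toLp 2 x

end Aux

theorem stmt16 {d : ℕ} (hd : 2 ≤ d) (p : ℕ) (hp : 1 ≤ p)
    (G : Subgroup (EuclideanSpace ℝ (Fin d) ≃ₗᵢ[ℝ] EuclideanSpace ℝ (Fin d)))
    [Fintype G] :
    (∀ k : ℕ, 1 ≤ k → k < d →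
      ∀ V : Submodule ℝ (EuclideanSpace ℝ (Fin d)), Module.finrank ℝ V = k →
        ∃ A : ℝ, 0 < A ∧ ∀ x : EuclideanSpace ℝ (Fin d),
          ∑ g : G,
            ‖proj (V.map
              ((g : EuclideanSpace ℝ (Fin d) ≃ₗᵢ[ℝ] EuclideanSpace ℝ (Fin d)).toLinearEquiv
                : EuclideanSpace ℝ (Fin d) →ₗ[ℝ] EuclideanSpace ℝ (Fin d))) x‖ ^ (2 * p)
            = A * ‖x‖ ^ (2 * p))
    ↔
    (∀ P : MvPolynomial (Fin d) ℝ, P.IsHomogeneous (2 * p) →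
      (∀ g ∈ G, ∀ x : EuclideanSpace ℝ (Fin d),
        MvPolynomial.eval (fun i => g x i) P = MvPolynomial.eval (fun i => x i) P) →
      ∃ c : ℝ, P = c • (∑ i : Fin d, MvPolynomial.X i ^ 2) ^ p) := by
  have hd0 : 0 < d := lt_of_lt_of_le two_pos hd
  have h1d : 1 < d := lt_of_lt_of_le one_lt_two hd
  have heven : Even (2 * p) := ⟨p, two_mul p⟩
  set E := EuclideanSpace ℝ (Fin d)
  constructor
  · -- (1) → (2)
    intro h1 P hP hinv
    -- Step 1: tight frames for lines
    have step1 : ∀ v : E, ‖v‖ = 1 → ∃ A : ℝ, 0 < A ∧ ∀ x : E,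
        (∑ g : G, (inner ℝ ((g : E ≃ₗᵢ[ℝ] E) v) x : ℝ) ^ (2 * p)) = A * ‖x‖ ^ (2 * p) := by
      intro v hv
      have hv0 : v ≠ 0 := by intro h; rw [h, norm_zero] at hv; norm_num at hv
      obtain ⟨A, hA, hAx⟩ := h1 1 le_rfl h1d (ℝ ∙ v) (finrank_span_singleton hv0)
      refine ⟨A, hA, fun x => ?_⟩
      rw [← hAx x]
      refine Finset.sum_congr rfl fun g _ => ?_
      have hmap : (ℝ ∙ v).map
          (((g : E ≃ₗᵢ[ℝ] E).toLinearEquiv : E →ₗ[ℝ] E))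
          = ℝ ∙ ((g : E ≃ₗᵢ[ℝ] E) v) := by
        rw [Submodule.map_span]
        simp
      have hnorm : ‖(g : E ≃ₗᵢ[ℝ] E) v‖ = 1 := by
        rw [(g : E ≃ₗᵢ[ℝ] E).norm_map]; exact hv
      rw [hmap, norm_proj_span_singleton hnorm, heven.pow_abs]
    -- Step 2: symmetry
    have step2 : ∀ v x : E,
        (∑ g : G, (inner ℝ ((g : E ≃ₗᵢ[ℝ] E) v) x : ℝ) ^ (2 * p))
          = ∑ g : G, (inner ℝ ((g : E ≃ₗᵢ[ℝ] E) x) v : ℝ) ^ (2 * p) := by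
      intro v x
      rw [← Equiv.sum_comp (Equiv.inv G) (fun g : G =>
        ((inner ℝ ((g : E ≃ₗᵢ[ℝ] E) x) v : ℝ)) ^ (2 * p))]
      refine Finset.sum_congr rfl fun g _ => ?_
      congr 1
      have h1 : ((Equiv.inv G g : G) : E ≃ₗᵢ[ℝ] E) = ((g : E ≃ₗᵢ[ℝ] E)).symm := rfl
      rw [h1]
      rw [← (g : E ≃ₗᵢ[ℝ] E).inner_map_map ((g : E ≃ₗᵢ[ℝ] E).symm x) v]
      rw [(g : E ≃ₗᵢ[ℝ] E).apply_symm_apply]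
      exact real_inner_comm _ _
    -- Step 3: uniform constant c for all unit vectors
    obtain ⟨v₀, hv₀⟩ := exists_unit_vector hd0
    obtain ⟨c, hc, hcx⟩ := step1 v₀ hv₀
    have step3 : ∀ v : E, ‖v‖ = 1 → ∀ x : E,
        (∑ g : G, (inner ℝ ((g : E ≃ₗᵢ[ℝ] E) v) x : ℝ) ^ (2 * p)) = c * ‖x‖ ^ (2 * p) := by
      intro v hv x
      obtain ⟨A, hA, hAx⟩ := step1 v hv
      have hAc : A = c := by
        have e1 := hAx v₀
        have e2 := hcx v
        rw [step2 v v₀] at e1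
        rw [e2, hv, hv₀] at e1
        simpa using e1.symm
      rw [hAx x, hAc]
    -- Step 4 & 5: apply the apolar pairing
    set K := Lpair P ((∑ i : Fin d, MvPolynomial.X i ^ 2) ^ p) with hK
    set lam := c * K / ((Fintype.card G : ℝ) * ((2 * p).factorial : ℝ)) with hlam
    have cardpos : (0 : ℝ) < (Fintype.card G : ℝ) := by
      exact_mod_cast Fintype.card_pos
    have factpos : (0 : ℝ) < (((2 * p).factorial : ℕ) : ℝ) := by
      exact_mod_cast Nat.factorial_pos _
    have step5 : ∀ v : E, ‖v‖ = 1 →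
        MvPolynomial.eval (fun i => v i) P = lam := by
      intro v hv
      have hpoly : (∑ g : G, (∑ i, MvPolynomial.C (((g : E ≃ₗᵢ[ℝ] E) v) i)
            * MvPolynomial.X i) ^ (2 * p))
          = c • (∑ i : Fin d, MvPolynomial.X i ^ 2) ^ p := by
        apply MvPolynomial.funext
        intro x
        rw [MvPolynomial.smul_eval]
        have hx : MvPolynomial.eval x (∑ g : G, (∑ i, MvPolynomial.C
            (((g : E ≃ₗᵢ[ℝ] E) v) i) * MvPolynomial.X i) ^ (2 * p))
            = ∑ g : G, (inner ℝ ((g : E ≃ₗᵢ[ℝ] E) v) (toE x) : ℝ) ^ (2 * p) := by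
          rw [map_sum]
          exact Finset.sum_congr rfl fun g _ => eval_linear_pow _ (toE x) (2 * p)
        rw [hx, step3 v hv (toE x), ← eval_norm_pow (toE x) p]
      have happ := congrArg (Lpair P) hpoly
      rw [Lpair_sum, Lpair_smul] at happ
      have hterm : ∀ g : G, Lpair P ((∑ i, MvPolynomial.C (((g : E ≃ₗᵢ[ℝ] E) v) i)
          * MvPolynomial.X i) ^ (2 * p))
          = ((2 * p).factorial : ℝ) * MvPolynomial.eval (fun i => v i) P := by
        intro g
        rw [Lpair_linear_pow P hP]
        congr 1
        exact hinv (g : E ≃ₗᵢ[ℝ] E) g.2 v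
      rw [Finset.sum_congr rfl (fun g _ => hterm g)] at happ
      rw [Finset.sum_const, Finset.card_univ, nsmul_eq_mul] at happ
      rw [← hK] at happ
      rw [hlam, eq_div_iff (by positivity)]
      linear_combination happ
    -- Step 6: conclude
    refine ⟨lam, ?_⟩
    apply MvPolynomial.funext
    intro x
    rw [MvPolynomial.smul_eval]
    by_cases hx : x = 0
    · subst hx
      have h0 : MvPolynomial.eval (0 : Fin d → ℝ) P = 0 := by
        have h := eval_homog_smul hP 0 (0 : Fin d → ℝ)
        have e : (fun i => (0:ℝ) * (0 : Fin d → ℝ) i) = (0 : Fin d → ℝ) := by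
          funext i; simp
        rw [e, zero_pow (by omega : 2 * p ≠ 0), zero_mul] at h
        exact h
      have h1 : MvPolynomial.eval (0 : Fin d → ℝ)
          ((∑ i : Fin d, MvPolynomial.X i ^ 2) ^ p) = 0 := by
        rw [map_pow, map_sum]
        simp only [map_pow, MvPolynomial.eval_X]
        have e : (∑ i : Fin d, ((0: Fin d → ℝ) i) ^ 2) = 0 := by simp
        rw [e]
        exact zero_pow (by omega : p ≠ 0)
      rw [h0, h1, mul_zero]
    · have hx0 : toE x ≠ 0 := fun h => hx (by simpa using congrArg WithLp.ofLp h)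
      set t := ‖toE x‖ with ht
      have htpos : 0 < t := norm_pos_iff.mpr hx0
      set v : EuclideanSpace ℝ (Fin d) := t⁻¹ • toE x with hv
      have hvnorm : ‖v‖ = 1 := by
        rw [hv, norm_smul, norm_inv, Real.norm_eq_abs, abs_of_pos htpos, ← ht,
          inv_mul_cancel₀ (ne_of_gt htpos)]
      have hxi : ∀ i, x i = t * v i := by
        intro i
        rw [hv]
        simp only [PiLp.smul_apply, smul_eq_mul, toE, WithLp.ofLp_toLp]
        field_simp
      have h1 : MvPolynomial.eval x P = t ^ (2*p) * MvPolynomial.eval (fun i => v i) P := by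
        have h := eval_homog_smul hP t (fun i => v i)
        have hxx : (fun i => t * v i) = x := by funext i; exact (hxi i).symm
        rw [hxx] at h
        exact h
      rw [h1, step5 v hvnorm]
      have h2 : MvPolynomial.eval x ((∑ i : Fin d, MvPolynomial.X i ^ 2) ^ p)
          = ‖toE x‖ ^ (2*p) := eval_norm_pow (toE x) p
      rw [h2, ← ht]
      ring
  · -- (2) → (1)
    intro h2 k hk1 hkd V hV
    set b : OrthonormalBasis (Fin k) ℝ V := (stdOrthonormalBasis ℝ V).reindex (finCongr hV)
      with hb
    set w : G → Fin k → E := fun g j => (g : E ≃ₗᵢ[ℝ] E) (b j : E) with hw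
    -- projections in terms of inner products
    have hnorm2 : ∀ (g : G) (y : E),
        ‖proj (V.map (((g : E ≃ₗᵢ[ℝ] E).toLinearEquiv : E →ₗ[ℝ] E))) y‖
          = ‖V.starProjection ((g : E ≃ₗᵢ[ℝ] E).symm y)‖ := by
      intro g y
      rw [proj_apply, Submodule.starProjection_map_apply, LinearIsometryEquiv.norm_map]
    have hproj : ∀ (g : G) (x : E),
        ‖proj (V.map (((g : E ≃ₗᵢ[ℝ] E).toLinearEquiv : E →ₗ[ℝ] E))) x‖ ^ 2
          = ∑ j, (inner ℝ (w g j) x : ℝ) ^ 2 := by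
      intro g x
      rw [hnorm2 g x, ← proj_apply, norm_proj_sq_eq_sum V b ((g : E ≃ₗᵢ[ℝ] E).symm x)]
      refine Finset.sum_congr rfl fun j _ => ?_
      congr 1
      rw [hw]
      rw [← (g : E ≃ₗᵢ[ℝ] E).inner_map_map ((b j : E)) ((g : E ≃ₗᵢ[ℝ] E).symm x),
        (g : E ≃ₗᵢ[ℝ] E).apply_symm_apply]
    -- the invariant polynomial
    set S : MvPolynomial (Fin d) ℝ := ∑ g : G,
        (∑ j : Fin k, (∑ i, MvPolynomial.C ((w g j) i) * MvPolynomial.X i) ^ 2) ^ p with hS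
    have hhom : S.IsHomogeneous (2 * p) := by
      rw [hS, ← MvPolynomial.mem_homogeneousSubmodule]
      apply Submodule.sum_mem
      intro g _
      rw [MvPolynomial.mem_homogeneousSubmodule]
      have hsq : (∑ j : Fin k,
          (∑ i, MvPolynomial.C ((w g j) i) * MvPolynomial.X i) ^ 2).IsHomogeneous 2 := by
        rw [← MvPolynomial.mem_homogeneousSubmodule]
        apply Submodule.sum_mem
        intro j _
        rw [MvPolynomial.mem_homogeneousSubmodule]
        have hlin : ((∑ i, MvPolynomial.C ((w g j) i) * MvPolynomial.X i)
            : MvPolynomial (Fin d) ℝ).IsHomogeneous 1 := by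
          rw [← MvPolynomial.mem_homogeneousSubmodule]
          apply Submodule.sum_mem
          intro i _
          rw [MvPolynomial.mem_homogeneousSubmodule]
          exact (MvPolynomial.isHomogeneous_X ℝ i).C_mul _
        have := hlin.pow 2
        simpa using this
      exact hsq.pow p
    have heval : ∀ x : E, MvPolynomial.eval (fun i => x i) S
        = ∑ g : G, ‖proj (V.map
            (((g : E ≃ₗᵢ[ℝ] E).toLinearEquiv : E →ₗ[ℝ] E))) x‖ ^ (2 * p) := by
      intro x
      rw [hS, map_sum]
      refine Finset.sum_congr rfl fun g _ => ?_
      rw [map_pow, map_sum]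
      have e1 : ∀ j : Fin k, MvPolynomial.eval (fun i => x i)
          ((∑ i, MvPolynomial.C ((w g j) i) * MvPolynomial.X i) ^ 2)
          = (inner ℝ (w g j) x : ℝ) ^ 2 := fun j => eval_linear_pow (w g j) x 2
      rw [Finset.sum_congr rfl (fun j _ => e1 j), ← hproj g x, ← pow_mul]
    -- invariance of S
    have hinvS : ∀ g₀ ∈ G, ∀ x : E,
        MvPolynomial.eval (fun i => g₀ x i) S = MvPolynomial.eval (fun i => x i) S := by
      intro g₀ hg₀ x
      have hmul : ∀ (a g : G) (y : E), ((a * g : G) : E ≃ₗᵢ[ℝ] E).symm y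
          = (g : E ≃ₗᵢ[ℝ] E).symm ((a : E ≃ₗᵢ[ℝ] E).symm y) := by
        intro a g y
        have h1 : ((a * g : G) : E ≃ₗᵢ[ℝ] E)
            = (g : E ≃ₗᵢ[ℝ] E).trans (a : E ≃ₗᵢ[ℝ] E) := rfl
        rw [h1, LinearIsometryEquiv.symm_trans]
        rfl
      have hEg : MvPolynomial.eval (fun i => (g₀ x) i) S
          = ∑ g : G, ‖V.starProjection ((g : E ≃ₗᵢ[ℝ] E).symm (g₀ x))‖ ^ (2*p) := by
        rw [heval (g₀ x)]
        exact Finset.sum_congr rfl fun g _ => by rw [hnorm2 g (g₀ x)]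
      have hEx : MvPolynomial.eval (fun i => x i) S
          = ∑ g : G, ‖V.starProjection ((g : E ≃ₗᵢ[ℝ] E).symm x)‖ ^ (2*p) := by
        rw [heval x]
        exact Finset.sum_congr rfl fun g _ => by rw [hnorm2 g x]
      rw [hEg, hEx]
      set a : G := ⟨g₀, hg₀⟩ with ha
      rw [← Equiv.sum_comp (Equiv.mulLeft a) (fun g : G =>
        ‖V.starProjection ((g : E ≃ₗᵢ[ℝ] E).symm (g₀ x))‖ ^ (2*p))]
      refine Finset.sum_congr rfl fun g _ => ?_
      have h2' : ((Equiv.mulLeft a g : G) : E ≃ₗᵢ[ℝ] E).symm (g₀ x)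
          = (g : E ≃ₗᵢ[ℝ] E).symm x := by
        have : (Equiv.mulLeft a g : G) = a * g := rfl
        rw [this, hmul a g (g₀ x)]
        congr 1
        have haa : ((a : G) : E ≃ₗᵢ[ℝ] E) = g₀ := rfl
        rw [haa, LinearIsometryEquiv.symm_apply_apply]
      simp only [h2']
    obtain ⟨c, hc⟩ := h2 S hhom hinvS
    have hAx : ∀ x : E, ∑ g : G, ‖proj (V.map
        (((g : E ≃ₗᵢ[ℝ] E).toLinearEquiv : E →ₗ[ℝ] E))) x‖ ^ (2 * p)
        = c * ‖x‖ ^ (2 * p) := by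
      intro x
      rw [← heval x, hc, MvPolynomial.smul_eval, eval_norm_pow x p]
    -- positivity
    have hVbot : V ≠ ⊥ := by
      intro h
      rw [h] at hV
      rw [finrank_bot] at hV
      omega
    obtain ⟨x₀, hx₀V, hx₀⟩ := Submodule.exists_mem_ne_zero_of_ne_bot hVbot
    have hx₀pos : (0:ℝ) < ‖x₀‖ ^ (2 * p) := by
      apply pow_pos
      exact norm_pos_iff.mpr hx₀
    have hterm : ‖proj (V.map
        ((((1:G) : E ≃ₗᵢ[ℝ] E).toLinearEquiv : E →ₗ[ℝ] E))) x₀‖ ^ (2 * p)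
        = ‖x₀‖ ^ (2 * p) := by
      have hmapid : V.map ((((1:G) : E ≃ₗᵢ[ℝ] E).toLinearEquiv : E →ₗ[ℝ] E)) = V := by
        have : ((((1:G) : E ≃ₗᵢ[ℝ] E).toLinearEquiv : E →ₗ[ℝ] E)) = LinearMap.id := rfl
        rw [this, Submodule.map_id]
      rw [hmapid]
      congr 1
      rw [proj_apply, Submodule.starProjection_eq_self_iff.mpr hx₀V]
    have hge : ‖x₀‖ ^ (2 * p) ≤ c * ‖x₀‖ ^ (2 * p) := by
      rw [← hAx x₀]
      rw [← hterm]
      apply Finset.single_le_sum (f := fun g : G => ‖proj (V.map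
        (((g : E ≃ₗᵢ[ℝ] E).toLinearEquiv : E →ₗ[ℝ] E))) x₀‖ ^ (2 * p))
      · intro g _
        positivity
      · exact Finset.mem_univ (1:G)
    have hcpos : 0 < c := by nlinarith
    exact ⟨c, hcpos, hAx⟩
end
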